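/- arXiv:1702.05141 — 4 statements merged into one kernel-verified Lean document; each statement's English description precedes it below -/
import Mathlib

section
/- Let M be a loopless matroid on a finite nonempty ground set E and let x ∈ ℝ^E. Then C(x), the set of M-ultrametrics l∞-nearest to x, is nonempty, and there exists a nonempty finite set V ⊆ ℝ^E with C(x) = tconv(V); in particular, C(x) is a tropical polytope. -/
variable {α : Type*}

/-- The weight of a set `B` with respect to `w`. -/
noncomputable def bweight (w : α → ℝ) (B : Set α) : ℝ := ∑ᶠ e ∈ B, w e

/-- `B` is a `w`-minimum basis of `M`. -/
def MinBase (M : Matroid α) (w : α → ℝ) (B : Set α) : Prop :=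
  M.IsBase B ∧ ∀ B', M.IsBase B' → bweight w B ≤ bweight w B'

/-- `w` is an `M`-ultrametric: every ground element lies in some `w`-minimum basis. -/
def MUltrametric (M : Matroid α) (w : α → ℝ) : Prop :=
  ∀ e ∈ M.E, ∃ B, MinBase M w B ∧ e ∈ B

/-- The `l∞`-distance `‖x - y‖∞ = max_e |x e - y e|`. -/
noncomputable def linf [Fintype α] [Nonempty α] (x y : α → ℝ) : ℝ :=
  Finset.univ.sup' Finset.univ_nonempty fun e => |x e - y e|

/-- `C(x)`: the set of `M`-ultrametrics that are `l∞`-nearest to `x`. -/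
def CSet [Fintype α] [Nonempty α] (M : Matroid α) (x : α → ℝ) : Set (α → ℝ) :=
  {w | MUltrametric M w ∧ ∀ u, MUltrametric M u → linf x w ≤ linf x u}

/-- The tropical convex hull of a nonempty finite set `V ⊆ ℝ^E`. -/
def tconv (V : Finset (α → ℝ)) (hV : V.Nonempty) : Set (α → ℝ) :=
  {w | ∃ lam : (α → ℝ) → ℝ, V.sup' hV lam = 0 ∧
    ∀ e, w e = V.sup' hV fun v => lam v + v e}

/-! ### Auxiliary development -/

section Aux

open Finset Set

/-- The closure-theoretic characterization of being an `M`-ultrametric: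
no element is spanned by the set of strictly lighter elements. -/
def UltChar (M : Matroid α) (w : α → ℝ) : Prop :=
  ∀ e, e ∉ M.closure {f | w f < w e}

lemma ultChar_iff_forall {M : Matroid α} {w : α → ℝ} :
    UltChar M w ↔ ∀ e (X : Set α), e ∈ M.closure X → ∃ f ∈ X, w e ≤ w f := by
  constructor
  · intro h e X heX
    by_contra hc
    push_neg at hc
    exact h e (M.closure_subset_closure (fun f hf => hc f hf) heX)
  · intro h e hecl
    obtain ⟨f, hf, hle⟩ := h e _ hecl
    exact absurd hle (not_le.2 hf)

lemma bweight_eq_sum [Fintype α] (w : α → ℝ) (B : Set α) :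
    bweight w B = ∑ i ∈ (Set.toFinite B).toFinset, w i :=
  finsum_mem_eq_finite_toFinset_sum _ _

lemma bweight_exchange [Fintype α] (w : α → ℝ) {B : Set α} {e f : α}
    (he : e ∈ B) (hf : f ∉ B) :
    bweight w (insert f (B \ {e})) = bweight w B - w e + w f := by
  classical
  rw [bweight_eq_sum, bweight_eq_sum]
  have hset : (Set.toFinite (insert f (B \ {e}))).toFinset
      = insert f (((Set.toFinite B).toFinset).erase e) := by
    ext g
    simp only [Set.Finite.mem_toFinset, Set.mem_insert_iff, Set.mem_diff,
      Set.mem_singleton_iff, Finset.mem_insert, Finset.mem_erase]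
    tauto
  rw [hset, Finset.sum_insert (by
    simp only [Finset.mem_erase, Set.Finite.mem_toFinset]
    tauto),
    Finset.sum_erase_eq_sub (by simp only [Set.Finite.mem_toFinset]; exact he)]
  ring

lemma mUltrametric_iff_ultChar [Fintype α] (M : Matroid α) (hE : M.E = Set.univ)
    (w : α → ℝ) : MUltrametric M w ↔ UltChar M w := by
  constructor
  · intro h e hecl
    obtain ⟨B, ⟨hB, hBmin⟩, heB⟩ := h e (by rw [hE]; trivial)
    have hBi := hB.indep
    have hIi : M.Indep (B \ {e}) := hBi.subset diff_subset
    have hne : ¬ ({f | w f < w e} ⊆ M.closure (B \ {e})) := by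
      intro hsub
      exact hBi.notMem_closure_diff_of_mem heB
        (M.closure_subset_closure_of_subset_closure hsub hecl)
    obtain ⟨f, hfX, hfcl⟩ := not_subset.1 hne
    have hflt : w f < w e := hfX
    have hfe : f ≠ e := by
      rintro rfl; exact lt_irrefl _ hflt
    have hfB : f ∉ B := by
      intro hfB
      exact hfcl (M.subset_closure (B \ {e}) (by rw [hE]; exact Set.subset_univ _) ⟨hfB, hfe⟩)
    have hind : M.Indep (insert f (B \ {e})) := by
      rw [hIi.insert_indep_iff_of_notMem (fun h' => hfB h'.1)]
      exact ⟨by rw [hE]; trivial, hfcl⟩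
    have hB' := hB.exchange_isBase_of_indep hfB hind
    have hle := hBmin _ hB'
    rw [bweight_exchange w heB hfB] at hle
    linarith
  · intro h e _
    obtain ⟨B, hB, hmin⟩ := Set.exists_min_image {B | M.IsBase B} (bweight w)
      (Set.toFinite _) M.exists_isBase
    by_cases heB : e ∈ B
    · exact ⟨B, ⟨hB, fun B' hB' => hmin B' hB'⟩, heB⟩
    obtain ⟨J, ⟨hJB, hecl⟩, hJmin⟩ :=
      Set.exists_min_image {J : Set α | J ⊆ B ∧ e ∈ M.closure J}
        Set.ncard (Set.toFinite _) ⟨B, subset_rfl, by rw [hB.closure_eq, hE]; trivial⟩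
    have hex : ∃ f ∈ J, w e ≤ w f := by
      by_contra hc
      push_neg at hc
      exact h e (M.closure_subset_closure (fun g hg => hc g hg) hecl)
    obtain ⟨f, hfJ, hwef⟩ := hex
    have hfB : f ∈ B := hJB hfJ
    have hminJ : e ∉ M.closure (J \ {f}) := by
      intro hc
      have hmem : (J \ {f}) ∈ {J : Set α | J ⊆ B ∧ e ∈ M.closure J} :=
        ⟨diff_subset.trans hJB, hc⟩
      have h1 := hJmin _ hmem
      have h2 : (J \ {f}).ncard < J.ncard :=
        Set.ncard_diff_singleton_lt_of_mem hfJ (Set.toFinite J)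
      omega
    have hexch : f ∈ M.closure (insert e (J \ {f})) \ M.closure (J \ {f}) :=
      Matroid.closure_exchange
        ⟨by rwa [Set.insert_diff_singleton, Set.insert_eq_of_mem hfJ], hminJ⟩
    have heBf : e ∉ M.closure (B \ {f}) := by
      intro hc
      have h1 : f ∈ M.closure (insert e (B \ {f})) :=
        M.closure_subset_closure (Set.insert_subset_insert (Set.diff_subset_diff_left hJB))
          hexch.1
      rw [Matroid.closure_insert_eq_of_mem_closure hc] at h1
      exact hB.indep.notMem_closure_diff_of_mem hfB h1
    have hind : M.Indep (insert e (B \ {f})) := by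
      rw [(hB.indep.subset diff_subset).insert_indep_iff_of_notMem (fun h' => heB h'.1)]
      exact ⟨by rw [hE]; trivial, heBf⟩
    have hB' := hB.exchange_isBase_of_indep (f := e) (e := f) heB hind
    have hwt := bweight_exchange w hfB heB
    refine ⟨insert e (B \ {f}), ⟨hB', fun B'' hB'' => ?_⟩, Set.mem_insert _ _⟩
    have := hmin B'' hB''
    rw [hwt]
    linarith

lemma ultChar_monotone {M : Matroid α} {w v : α → ℝ} (hw : UltChar M w)
    (hmono : ∀ a b, w a ≤ w b → v a ≤ v b) : UltChar M v := by
  intro e hecl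
  refine hw e (M.closure_subset_closure ?_ hecl)
  intro f hf
  by_contra hc
  simp only [Set.mem_setOf_eq, not_lt] at hc
  exact absurd (hmono e f hc) (not_le.2 hf)

lemma ultChar_binmax {M : Matroid α} {u v : α → ℝ} (hu : UltChar M u) (hv : UltChar M v)
    {c : ℝ} (_hc : c ≤ 0) : UltChar M (fun f => max (u f) (c + v f)) := by
  intro e hecl
  rcases max_choice (u e) (c + v e) with hme | hme
  · refine hu e (M.closure_subset_closure ?_ hecl)
    intro f hf
    simp only [Set.mem_setOf_eq] at hf ⊢
    have h1 : u f ≤ max (u f) (c + v f) := le_max_left _ _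
    rw [hme] at hf
    linarith
  · refine hv e (M.closure_subset_closure ?_ hecl)
    intro f hf
    simp only [Set.mem_setOf_eq] at hf ⊢
    have h1 : c + v f ≤ max (u f) (c + v f) := le_max_right _ _
    rw [hme] at hf
    linarith

lemma isClosed_ultChar [Fintype α] (M : Matroid α) :
    IsClosed {w : α → ℝ | UltChar M w} := by
  have hrw : {w : α → ℝ | UltChar M w} =
      ⋂ (e : α), ⋂ (X : Set α), ⋂ (_ : e ∈ M.closure X), {w : α → ℝ | ∃ f ∈ X, w e ≤ w f} := by
    ext w
    simp only [Set.mem_setOf_eq, Set.mem_iInter]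
    exact ultChar_iff_forall
  rw [hrw]
  refine isClosed_iInter fun e => isClosed_iInter fun X => isClosed_iInter fun _ => ?_
  have hrw2 : {w : α → ℝ | ∃ f ∈ X, w e ≤ w f} = ⋃ f ∈ X, {w : α → ℝ | w e ≤ w f} := by
    ext w; simp
  rw [hrw2]
  exact X.toFinite.isClosed_biUnion fun f _ =>
    isClosed_le (continuous_apply e) (continuous_apply f)

lemma continuous_finset_sup' {β : Type*} {s : Finset β} (hs : s.Nonempty)
    (g : β → (α → ℝ) → ℝ) (hg : ∀ b, Continuous (g b)) :
    Continuous fun y => s.sup' hs fun b => g b y := by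
  induction hs using Finset.Nonempty.cons_induction with
  | singleton a => simpa using hg a
  | cons a s h hs ih =>
    refine ((hg a).max ih).congr fun y => ?_
    rw [Finset.sup'_cons]

lemma linf_le_iff [Fintype α] [Nonempty α] {x w : α → ℝ} {R : ℝ} :
    linf x w ≤ R ↔ ∀ e, |x e - w e| ≤ R := by
  unfold linf
  rw [Finset.sup'_le_iff]
  exact ⟨fun h e => h e (Finset.mem_univ e), fun h e _ => h e⟩

lemma abs_le_linf [Fintype α] [Nonempty α] (x w : α → ℝ) (e : α) :
    |x e - w e| ≤ linf x w := by
  unfold linf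
  exact Finset.le_sup' (fun e => |x e - w e|) (Finset.mem_univ e)

lemma exists_nearest [Fintype α] [Nonempty α] (M : Matroid α)
    (hloop : ∀ e, M.Indep {e}) (x : α → ℝ) :
    ∃ w₀, UltChar M w₀ ∧ ∀ u, UltChar M u → linf x w₀ ≤ linf x u := by
  have h0 : UltChar M (fun _ => (0 : ℝ)) := by
    intro e
    have hrw : {f | (fun _ => (0:ℝ)) f < (fun _ => (0:ℝ)) e} = (∅ : Set α) := by
      ext; simp
    rw [hrw]
    have he := (hloop e).notMem_closure_diff_of_mem (Set.mem_singleton e)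
    simpa using he
  set R := linf x (fun _ => (0 : ℝ)) with hR
  set K := {w : α → ℝ | UltChar M w ∧ linf x w ≤ R} with hK
  have hKne : K.Nonempty := ⟨_, h0, le_refl _⟩
  have hKclosed : IsClosed K := by
    have hrw : K = {w : α → ℝ | UltChar M w} ∩ ⋂ e, {w : α → ℝ | |x e - w e| ≤ R} := by
      ext w
      simp only [hK, Set.mem_setOf_eq, Set.mem_inter_iff, Set.mem_iInter, linf_le_iff]
    rw [hrw]
    exact (isClosed_ultChar M).inter (isClosed_iInter fun e =>
      isClosed_le ((continuous_const.sub (continuous_apply e)).abs) continuous_const)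
  have hKsub : K ⊆ Set.pi Set.univ (fun e => Set.Icc (x e - R) (x e + R)) := by
    intro w hw e _
    have h1 := linf_le_iff.1 hw.2 e
    rw [abs_le] at h1
    exact ⟨by linarith [h1.2], by linarith [h1.1]⟩
  have hKcpt : IsCompact K :=
    (isCompact_univ_pi fun e => isCompact_Icc).of_isClosed_subset hKclosed hKsub
  have hcont : Continuous fun w : α → ℝ => linf x w := by
    unfold linf
    exact continuous_finset_sup' Finset.univ_nonempty (fun e y => |x e - y e|)
      (fun e => (continuous_const.sub (continuous_apply e)).abs)
  obtain ⟨w₀, hw₀K, hw₀min⟩ := hKcpt.exists_isMinOn hKne hcont.continuousOn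
  refine ⟨w₀, hw₀K.1, fun u hu => ?_⟩
  by_cases huK : linf x u ≤ R
  · exact isMinOn_iff.1 hw₀min u ⟨hu, huK⟩
  · exact hw₀K.2.trans (not_le.1 huK).le

section Generators

variable [DecidableEq α] [Fintype α]

/-- Whether `w a ≤ w b`, as a Boolean relation. -/
noncomputable def rOf (w : α → ℝ) : α → α → Bool := fun a b =>
  @decide (w a ≤ w b) (Classical.propDecidable _)

lemma rOf_iff {w : α → ℝ} {a b : α} : rOf w a b = true ↔ w a ≤ w b := by
  simp [rOf]

/-- The down-set of `f` in the Boolean relation `r` (with `f` adjoined). -/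
noncomputable def gDf (r : α → α → Bool) (f : α) : Finset α :=
  insert f (Finset.univ.filter fun g => r g f)

lemma gDf_nonempty (r : α → α → Bool) (f : α) : (gDf r f).Nonempty :=
  Finset.insert_nonempty _ _

lemma mem_gDf_rOf {w : α → ℝ} {g f : α} : g ∈ gDf (rOf w) f ↔ w g ≤ w f := by
  simp only [gDf, Finset.mem_insert, Finset.mem_filter, Finset.mem_univ, true_and, rOf_iff]
  constructor
  · rintro (rfl | h)
    · exact le_refl _
    · exact h
  · exact fun h => Or.inr h

/-- The up-set of `e` (with `e` adjoined). -/
noncomputable def gDe (r : α → α → Bool) (e : α) : Finset α :=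
  insert e (Finset.univ.filter fun g => r e g)

lemma gDe_nonempty (r : α → α → Bool) (e : α) : (gDe r e).Nonempty :=
  Finset.insert_nonempty _ _

lemma mem_gDe_rOf {w : α → ℝ} {g e : α} : g ∈ gDe (rOf w) e ↔ w e ≤ w g := by
  simp only [gDe, Finset.mem_insert, Finset.mem_filter, Finset.mem_univ, true_and, rOf_iff]
  constructor
  · rintro (rfl | h)
    · exact le_refl _
    · exact h
  · exact fun h => Or.inr h

/-- The lower generator. -/
noncomputable def gL (x : α → ℝ) (d : ℝ) (r : α → α → Bool) (f : α) : ℝ :=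
  (gDf r f).sup' (gDf_nonempty r f) fun g => x g - d

/-- The upper envelope. -/
noncomputable def gH (x : α → ℝ) (d : ℝ) (r : α → α → Bool) (e : α) : ℝ :=
  (gDe r e).inf' (gDe_nonempty r e) fun g => x g + d

/-- The tropical vertex generators. -/
noncomputable def gV (x : α → ℝ) (d : ℝ) (r : α → α → Bool) (e f : α) : ℝ :=
  if r e f then max (gL x d r f) (gH x d r e) else gL x d r f

/-- All candidate generators, parametrized over a finite type. -/
noncomputable def genFun (x : α → ℝ) (d : ℝ) : (α → α → Bool) × Option α → α → ℝ :=
  fun p => match p.2 with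
  | none => gL x d p.1
  | some e => gV x d p.1 e

variable {x w : α → ℝ} {d : ℝ}

lemma gL_ge (f : α) : x f - d ≤ gL x d (rOf w) f := by
  unfold gL
  exact Finset.le_sup' (fun g => x g - d) (mem_gDf_rOf.2 (le_refl (w f)))

lemma gL_le_w (hw : ∀ e, |x e - w e| ≤ d) (f : α) : gL x d (rOf w) f ≤ w f := by
  refine Finset.sup'_le _ _ fun g hg => ?_
  have h1 := mem_gDf_rOf.1 hg
  have h2 := hw g
  rw [abs_le] at h2
  linarith [h2.2]

lemma gL_mono {a b : α} (hab : w a ≤ w b) : gL x d (rOf w) a ≤ gL x d (rOf w) b := by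
  unfold gL
  exact Finset.sup'_le _ _ fun g hg =>
    Finset.le_sup' (fun g => x g - d) (mem_gDf_rOf.2 ((mem_gDf_rOf.1 hg).trans hab))

lemma gH_le (e : α) : gH x d (rOf w) e ≤ x e + d :=
  Finset.inf'_le _ (mem_gDe_rOf.2 (le_refl (w e)))

lemma w_le_gH (hw : ∀ e, |x e - w e| ≤ d) (e : α) : w e ≤ gH x d (rOf w) e := by
  refine Finset.le_inf' _ _ fun g hg => ?_
  have h1 := mem_gDe_rOf.1 hg
  have h2 := hw g
  rw [abs_le] at h2
  linarith [h2.1]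

lemma gL_box (hw : ∀ e, |x e - w e| ≤ d) (f : α) : |x f - gL x d (rOf w) f| ≤ d := by
  have h1 := gL_ge (x := x) (d := d) (w := w) f
  have h2 := gL_le_w hw f
  have h3 := hw f
  rw [abs_le] at h3 ⊢
  exact ⟨by linarith [h3.1], by linarith⟩

lemma gV_mono (e : α) {a b : α} (hab : w a ≤ w b) :
    gV x d (rOf w) e a ≤ gV x d (rOf w) e b := by
  unfold gV
  split_ifs with h1 h2 h2
  · exact max_le_max (gL_mono hab) (le_refl _)
  · exact absurd (rOf_iff.2 ((rOf_iff.1 h1).trans hab)) h2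
  · exact le_trans (gL_mono hab) (le_max_left _ _)
  · exact gL_mono hab

lemma gV_box (hw : ∀ e, |x e - w e| ≤ d) (e f : α) : |x f - gV x d (rOf w) e f| ≤ d := by
  have h1 := gL_ge (x := x) (d := d) (w := w) f
  have h2 := gL_le_w hw f
  have h3 := hw f
  rw [abs_le] at h3
  unfold gV
  split_ifs with h
  · have h4 : gH x d (rOf w) e ≤ x f + d :=
      Finset.inf'_le _ (mem_gDe_rOf.2 (rOf_iff.1 h))
    rw [abs_le]
    constructor
    · have : max (gL x d (rOf w) f) (gH x d (rOf w) e) ≤ x f + d :=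
        max_le (by linarith [h3.2]) h4
      linarith
    · have : x f - d ≤ max (gL x d (rOf w) f) (gH x d (rOf w) e) :=
        le_trans h1 (le_max_left _ _)
      linarith
  · rw [abs_le]
    exact ⟨by linarith [h3.2], by linarith⟩

lemma gV_self (hw : ∀ e, |x e - w e| ≤ d) (f : α) :
    gV x d (rOf w) f f = gH x d (rOf w) f := by
  unfold gV
  rw [if_pos (rOf_iff.2 (le_refl (w f)))]
  exact max_eq_right ((gL_le_w hw f).trans (w_le_gH hw f))

lemma gV_attain (hw : ∀ e, |x e - w e| ≤ d) (f g : α) :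
    w f - gH x d (rOf w) f ≤ w g - gV x d (rOf w) f g := by
  have hL := gL_le_w hw g
  have hH := w_le_gH hw f
  unfold gV
  split_ifs with h
  · have hfg : w f ≤ w g := rOf_iff.1 h
    rcases max_choice (gL x d (rOf w) g) (gH x d (rOf w) f) with hm | hm <;> rw [hm]
    · linarith
    · linarith
  · linarith

end Generators

lemma sup'_combo_mem {T : Set (α → ℝ)}
    (hT : ∀ u ∈ T, ∀ v ∈ T, ∀ c : ℝ, c ≤ 0 → (fun f => max (u f) (c + v f)) ∈ T) :
    ∀ (V : Finset (α → ℝ)) (hV : V.Nonempty), ↑V ⊆ T → ∀ lam : (α → ℝ) → ℝ,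
      V.sup' hV lam = 0 → (fun f => V.sup' hV fun v => lam v + v f) ∈ T := by
  intro V hV
  induction hV using Finset.Nonempty.cons_induction with
  | singleton a =>
    intro hsub lam h0
    simp only [Finset.sup'_singleton] at h0 ⊢
    have hrw : (fun f => lam a + a f) = a := by
      funext f; rw [h0, zero_add]
    rw [hrw]
    exact hsub (by simp)
  | cons a s h hs ih =>
    intro hsub lam h0
    rw [Finset.sup'_cons (H := hs)] at h0
    set c' := s.sup' hs lam with hc'
    have hsubs : ↑s ⊆ T := fun v hv => hsub (by simp [hv])
    have haT : a ∈ T := hsub (by simp)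
    have hla : lam a ≤ 0 := le_trans le_sup_left h0.le
    have hc'0 : c' ≤ 0 := le_trans le_sup_right h0.le
    have hcomb : (fun f => s.sup' hs fun v => (lam v - c') + v f) ∈ T := by
      apply ih hsubs
      obtain ⟨v0, hv0, hv0e⟩ := Finset.exists_mem_eq_sup' hs lam
      apply le_antisymm
      · refine Finset.sup'_le _ _ fun v hv => sub_nonpos.2 ?_
        rw [hc']
        exact Finset.le_sup' lam hv
      · have hz : lam v0 - c' = 0 := by rw [hc', hv0e]; ring
        calc (0:ℝ) = lam v0 - c' := hz.symm
        _ ≤ _ := Finset.le_sup' (fun v => lam v - c') hv0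
    have hkey : ∀ f, s.sup' hs (fun v => lam v + v f)
        = c' + s.sup' hs (fun v => (lam v - c') + v f) := by
      intro f
      rw [Finset.comp_sup'_eq_sup'_comp hs (fun t => c' + t)
        (fun p q => by exact (max_add_add_left c' p q).symm)]
      congr 1
      funext v
      simp only [Function.comp]
      ring
    have hgoal : (fun f => (Finset.cons a s h).sup' (Finset.cons_nonempty h)
          fun v => lam v + v f)
        = fun f => max (lam a + a f) (c' + s.sup' hs fun v => (lam v - c') + v f) := by
      funext f
      rw [Finset.sup'_cons (H := hs), hkey f]
    rw [hgoal]
    have h0' : max (lam a) c' = 0 := h0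
    rcases max_choice (lam a) c' with hm | hm
    · have hla0 : lam a = 0 := hm.symm.trans h0'
      have := hT a haT _ hcomb c' hc'0
      have hrw : (fun f => max (lam a + a f) (c' + s.sup' hs fun v => (lam v - c') + v f))
          = fun f => max (a f) (c' + s.sup' hs fun v => (lam v - c') + v f) := by
        funext f; rw [hla0, zero_add]
      rw [hrw]
      exact this
    · have hc0 : c' = 0 := hm.symm.trans h0'
      have := hT _ hcomb a haT (lam a) hla
      have hrw : (fun f => max (lam a + a f) (c' + s.sup' hs fun v => (lam v - c') + v f))
          = fun f => max ((fun f => s.sup' hs fun v => (lam v - c') + v f) f) (lam a + a f) := by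
        funext f; rw [hc0, zero_add, max_comm]
      rw [hrw]
      exact this

end Aux

/-- For a loopless matroid on a finite nonempty ground set and `x ∈ ℝ^E`, the set
`C(x)` of `M`-ultrametrics `l∞`-nearest to `x` is nonempty and is the tropical convex
hull of a nonempty finite set; in particular it is a tropical polytope. -/
theorem stmt10 [Fintype α] [Nonempty α] (M : Matroid α) (hE : M.E = Set.univ)
    (hloop : ∀ e, M.Indep {e}) (x : α → ℝ) :
    (CSet M x).Nonempty ∧
      ∃ (V : Finset (α → ℝ)) (hV : V.Nonempty), CSet M x = tconv V hV := by
  classical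
  obtain ⟨w₀, hw₀U, hw₀min⟩ := exists_nearest M hloop x
  set d := linf x w₀ with hd
  set S := {w : α → ℝ | UltChar M w ∧ ∀ e, |x e - w e| ≤ d} with hS
  have hw₀S : w₀ ∈ S := ⟨hw₀U, fun e => abs_le_linf x w₀ e⟩
  -- C(x) = S
  have hCS : CSet M x = S := by
    ext w
    simp only [CSet, Set.mem_setOf_eq, hS]
    constructor
    · rintro ⟨h1, h2⟩
      refine ⟨(mUltrametric_iff_ultChar M hE w).1 h1, fun e => ?_⟩
      have h3 := h2 w₀ ((mUltrametric_iff_ultChar M hE w₀).2 hw₀U)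
      exact le_trans (abs_le_linf x w e) h3
    · rintro ⟨h1, h2⟩
      refine ⟨(mUltrametric_iff_ultChar M hE w).2 h1, fun u hu => ?_⟩
      exact (linf_le_iff.2 h2).trans (hw₀min u ((mUltrametric_iff_ultChar M hE u).1 hu))
  -- S is closed under binary tropical combinations
  have hSbin : ∀ u ∈ S, ∀ v ∈ S, ∀ c : ℝ, c ≤ 0 → (fun f => max (u f) (c + v f)) ∈ S := by
    rintro u ⟨hu1, hu2⟩ v ⟨hv1, hv2⟩ c hc
    refine ⟨ultChar_binmax hu1 hv1 hc, fun e => ?_⟩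
    have h1 := hu2 e
    have h2 := hv2 e
    rw [abs_le] at h1 h2 ⊢
    constructor
    · have : max (u e) (c + v e) ≤ x e + d := max_le (by linarith [h1.1]) (by linarith [h2.1])
      linarith
    · have : x e - d ≤ u e := by linarith [h1.2]
      have h3 := le_max_left (u e) (c + v e)
      linarith
  -- the generators belong to S
  have hgLS : ∀ w ∈ S, gL x d (rOf w) ∈ S := fun w hw =>
    ⟨ultChar_monotone hw.1 (fun a b hab => gL_mono hab), gL_box hw.2⟩
  have hgVS : ∀ w ∈ S, ∀ e, gV x d (rOf w) e ∈ S := fun w hw e =>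
    ⟨ultChar_monotone hw.1 (fun a b hab => gV_mono e hab), gV_box hw.2 e⟩
  -- the finite generating set
  set VS : Set (α → ℝ) := {v | (∃ p : (α → α → Bool) × Option α, genFun x d p = v) ∧ v ∈ S}
    with hVS
  have hVSfin : VS.Finite :=
    (Set.finite_range (genFun x d)).subset fun v hv => hv.1
  set V := hVSfin.toFinset with hV
  have hVsub : ↑V ⊆ S := by
    intro v hv
    exact (hVSfin.mem_toFinset.1 hv).2
  have hgLmem : ∀ w ∈ S, gL x d (rOf w) ∈ V := fun w hw =>
    hVSfin.mem_toFinset.2 ⟨⟨(rOf w, none), rfl⟩, hgLS w hw⟩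
  have hgVmem : ∀ w ∈ S, ∀ e, gV x d (rOf w) e ∈ V := fun w hw e =>
    hVSfin.mem_toFinset.2 ⟨⟨(rOf w, some e), rfl⟩, hgVS w hw e⟩
  have hVne : V.Nonempty := ⟨gL x d (rOf w₀), hgLmem w₀ hw₀S⟩
  refine ⟨⟨w₀, hCS ▸ hw₀S⟩, V, hVne, ?_⟩
  rw [hCS]
  ext w
  constructor
  · -- S ⊆ tconv V
    intro hwS
    set lam : (α → ℝ) → ℝ :=
      fun v => min 0 (Finset.univ.inf' Finset.univ_nonempty fun g => w g - v g) with hlam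
    have hlam_le : ∀ (v : α → ℝ) (f : α), lam v + v f ≤ w f := by
      intro v f
      have h2 : (Finset.univ.inf' Finset.univ_nonempty fun g => w g - v g) ≤ w f - v f :=
        Finset.inf'_le _ (Finset.mem_univ f)
      rcases le_total (Finset.univ.inf' Finset.univ_nonempty fun g => w g - v g) 0 with ht | ht
      · rw [hlam]
        simp only
        rw [min_eq_right ht]
        linarith
      · rw [hlam]
        simp only
        rw [min_eq_left ht]
        linarith
    have hlamL : lam (gL x d (rOf w)) = 0 := by
      rw [hlam]
      simp only
      exact min_eq_left (Finset.le_inf' _ _ fun g _ => sub_nonneg.2 (gL_le_w hwS.2 g))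
    have hinf : ∀ f : α,
        (Finset.univ.inf' Finset.univ_nonempty fun g => w g - gV x d (rOf w) f g)
          = w f - gH x d (rOf w) f := by
      intro f
      apply le_antisymm
      · have h1 : w f - gV x d (rOf w) f f = w f - gH x d (rOf w) f := by
          rw [gV_self hwS.2]
        exact h1 ▸ Finset.inf'_le _ (Finset.mem_univ f)
      · exact Finset.le_inf' _ _ fun g _ => gV_attain hwS.2 f g
    have hlamV : ∀ f : α, lam (gV x d (rOf w) f) = w f - gH x d (rOf w) f := by
      intro f
      rw [hlam]
      simp only
      rw [hinf f]
      exact min_eq_right (sub_nonpos.2 (w_le_gH hwS.2 f))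
    refine ⟨lam, ?_, ?_⟩
    · apply le_antisymm
      · exact Finset.sup'_le _ _ fun v _ => min_le_left _ _
      · calc (0:ℝ) = lam (gL x d (rOf w)) := hlamL.symm
        _ ≤ _ := Finset.le_sup' _ (hgLmem w hwS)
    · intro f
      apply le_antisymm
      · have h1 : w f = lam (gV x d (rOf w) f) + gV x d (rOf w) f f := by
          rw [hlamV f, gV_self hwS.2]
          ring
        rw [h1]
        exact Finset.le_sup' (fun v => lam v + v f) (hgVmem w hwS f)
      · exact Finset.sup'_le _ _ fun v _ => hlam_le v f
  · -- tconv V ⊆ S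
    rintro ⟨lam, h0, hrep⟩
    have hrw : w = fun f => V.sup' hVne fun v => lam v + v f := funext hrep
    rw [hrw]
    exact sup'_combo_mem hSbin V hVne hVsub lam h0
end

section
/- Let M be a loopless matroid on a finite nonempty ground set E and let x ∈ ℝ^E. Suppose x^M ∈ ℝ^E is an M-ultrametric with x^M(e) ≤ x(e) for all e ∈ E, such that every M-ultrametric w with w(e) ≤ x(e) for all e satisfies w(e) ≤ x^M(e) for all e (x^M is the subdominant M-ultrametric of x). Put δ = (1/2)·max_{e∈E}(x(e) − x^M(e)). Then: (1) every M-ultrametric w satisfies ‖x − w‖∞ ≥ δ, so the l∞-distance from x to the Bergman fan of M equals δ; and (2) the vector x^M + δ·1, obtained from x^M by adding δ to every coordinate, is an M-ultrametric with ‖x − (x^M + δ·1)‖∞ = δ, hence is an M-ultrametric l∞-nearest to x. -/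
variable {α : Type*}

/-- `δ = (1/2)·max_e (x e - xM e)`, where `xM` is the subdominant `M`-ultrametric. -/
noncomputable def subDelta [Fintype α] [Nonempty α] (x xM : α → ℝ) : ℝ :=
  (Finset.univ.sup' Finset.univ_nonempty fun e => x e - xM e) / 2


lemma bweight_add_const [Fintype α] (w : α → ℝ) (c : ℝ) (B : Set α) :
    bweight (fun e => w e + c) B = bweight w B + B.ncard * c := by
  unfold bweight
  rw [← (Set.toFinite B).coe_toFinset, finsum_mem_coe_finset, finsum_mem_coe_finset,
    Finset.sum_add_distrib, Finset.sum_const]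
  simp [Set.ncard_coe_finset, nsmul_eq_mul, mul_comm]
  exact Or.inl (Set.ncard_eq_toFinset_card _ _).symm

lemma mult_shift [Fintype α] (M : Matroid α) (w : α → ℝ) (c : ℝ)
    (h : MUltrametric M w) : MUltrametric M (fun e => w e + c) := by
  intro e he
  obtain ⟨B, ⟨hB, hmin⟩, heB⟩ := h e he
  refine ⟨B, ⟨hB, fun B' hB' => ?_⟩, heB⟩
  rw [bweight_add_const, bweight_add_const, hB.ncard_eq_ncard_of_isBase hB']
  exact add_le_add_left (hmin B' hB') _

/-- If `xM` is the subdominant `M`-ultrametric of `x` and `δ = (1/2)max_e(x e - xM e)`,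
then every `M`-ultrametric is at `l∞`-distance at least `δ` from `x`, and `xM + δ·1`
is an `M`-ultrametric at distance exactly `δ`; so the distance from `x` to the Bergman
fan is `δ` and `xM + δ·1` is `l∞`-nearest to `x`. -/
theorem stmt12 [Fintype α] [Nonempty α] (M : Matroid α) (hE : M.E = Set.univ)
    (hloop : ∀ e, M.Indep {e}) (x xM : α → ℝ)
    (hxMu : MUltrametric M xM) (hxMle : ∀ e, xM e ≤ x e)
    (hsub : ∀ w : α → ℝ, MUltrametric M w → (∀ e, w e ≤ x e) → ∀ e, w e ≤ xM e) :
    (∀ w : α → ℝ, MUltrametric M w → subDelta x xM ≤ linf x w) ∧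
      MUltrametric M (fun e => xM e + subDelta x xM) ∧
      linf x (fun e => xM e + subDelta x xM) = subDelta x xM := by
  obtain ⟨e0, -, he0⟩ := Finset.exists_mem_eq_sup' (Finset.univ_nonempty (α := α))
    (fun e => x e - xM e)
  have hδ : subDelta x xM = (x e0 - xM e0) / 2 := by unfold subDelta; rw [he0]
  have hme : ∀ e, x e - xM e ≤ x e0 - xM e0 := fun e =>
    he0 ▸ Finset.le_sup' (fun e => x e - xM e) (Finset.mem_univ e)
  have hm0 : 0 ≤ x e0 - xM e0 := by linarith [hxMle e0]
  constructor
  · intro w hw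
    have hde : ∀ e, |x e - w e| ≤ linf x w := fun e =>
      Finset.le_sup' (fun e => |x e - w e|) (Finset.mem_univ e)
    have hw' : MUltrametric M (fun e => w e + (-(linf x w))) :=
      mult_shift M w (-(linf x w)) hw
    have hle : ∀ e, w e + (-(linf x w)) ≤ xM e := by
      refine hsub _ hw' fun e => ?_
      have := abs_le.mp (hde e)
      linarith [this.2]
    have h1 := abs_le.mp (hde e0)
    have h2 := hle e0
    rw [hδ]
    linarith [h1.1]
  · refine ⟨mult_shift M xM _ hxMu, ?_⟩
    have key : ∀ e, |x e - (xM e + subDelta x xM)| ≤ subDelta x xM := by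
      intro e
      rw [hδ, abs_le]
      constructor <;> [linarith [hxMle e]; linarith [hme e]]
    have keq : |x e0 - (xM e0 + subDelta x xM)| = subDelta x xM := by
      rw [hδ, abs_of_nonneg (by linarith)]
      linarith
    refine le_antisymm (Finset.sup'_le _ _ fun e _ => key e) ?_
    exact le_trans keq.ge <| Finset.le_sup' (fun e => |x e - (xM e + subDelta x xM)|) (Finset.mem_univ e0)
end

section
/- Let M be a loopless matroid on a finite nonempty ground set E and let x ∈ ℝ^E. Suppose x^M ∈ ℝ^E is an M-ultrametric with x^M(e) ≤ x(e) for all e ∈ E, such that every M-ultrametric w with w(e) ≤ x(e) for all e satisfies w(e) ≤ x^M(e) for all e. Put δ = (1/2)·max_{e∈E}(x(e) − x^M(e)). Then every M-ultrametric y with ‖x − y‖∞ ≤ δ satisfies y(e) ≤ x^M(e) + δ for all e ∈ E; that is, x^M + δ·1 is coordinatewise maximal among M-ultrametrics l∞-nearest to x. -/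
variable {α : Type*}

lemma bweight_sub_const [Fintype α] (w : α → ℝ) (c : ℝ) (B : Set α) :
    bweight (fun e => w e - c) B = bweight w B - B.ncard * c := by
  classical
  have h1 : B = ↑(B.toFinset) := (Set.coe_toFinset B).symm
  unfold bweight
  rw [h1, finsum_mem_coe_finset, finsum_mem_coe_finset, Finset.sum_sub_distrib,
    Finset.sum_const, Set.ncard_coe_finset, nsmul_eq_mul]

lemma mUltrametric_sub_const [Fintype α] (M : Matroid α) (w : α → ℝ) (c : ℝ)
    (h : MUltrametric M w) : MUltrametric M (fun e => w e - c) := by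
  intro e he
  obtain ⟨B, ⟨hB, hmin⟩, heB⟩ := h e he
  refine ⟨B, ⟨hB, fun B' hB' => ?_⟩, heB⟩
  rw [bweight_sub_const, bweight_sub_const, hB.ncard_eq_ncard_of_isBase hB']
  linarith [hmin B' hB']

/-- With `xM` the subdominant `M`-ultrametric of `x` and `δ = (1/2)max_e(x e - xM e)`,
every `M`-ultrametric `y` with `‖x - y‖∞ ≤ δ` satisfies `y ≤ xM + δ·1` coordinatewise:
`xM + δ·1` is coordinatewise maximal among `M`-ultrametrics `l∞`-nearest to `x`. -/
theorem stmt13 [Fintype α] [Nonempty α] (M : Matroid α) (hE : M.E = Set.univ)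
    (hloop : ∀ e, M.Indep {e}) (x xM : α → ℝ)
    (hxMu : MUltrametric M xM) (hxMle : ∀ e, xM e ≤ x e)
    (hsub : ∀ w : α → ℝ, MUltrametric M w → (∀ e, w e ≤ x e) → ∀ e, w e ≤ xM e) :
    ∀ y : α → ℝ, MUltrametric M y → linf x y ≤ subDelta x xM →
      ∀ e, y e ≤ xM e + subDelta x xM := by
  intro y hy hlin e
  set δ := subDelta x xM
  have hu : MUltrametric M (fun e => y e - δ) := mUltrametric_sub_const M y δ hy
  have hle : ∀ e, y e - δ ≤ x e := by
    intro e
    have h1 : |x e - y e| ≤ linf x y :=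
      Finset.le_sup' (fun e => |x e - y e|) (Finset.mem_univ e)
    have := abs_le.mp (h1.trans hlin)
    linarith [this.1]
  have := hsub _ hu hle e
  linarith
end

section
/- Let M be a loopless matroid on a finite nonempty ground set E and let x ∈ ℝ^E. If v is a tropical vertex of C(x), then at most one flat of M is mobile for v across all resolutions of T(v): for any resolutions S₁ and S₂ of T(v), any compatible α₁ with v = w^{S₁,α₁} and α₂ with v = w^{S₂,α₂}, and any mobile members F₁ ∈ S₁ and F₂ ∈ S₂, one has F₁ = F₂. -/
variable {α : Type*}

/-- A circuit of `M`: a dependent subset of the ground set all of whose proper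
subsets are independent. -/
def MCircuit (M : Matroid α) (C : Set α) : Prop :=
  C ⊆ M.E ∧ ¬ M.Indep C ∧ ∀ D : Set α, D ⊂ C → M.Indep D

/-- A matroid is connected if its ground set is nonempty and any two distinct
elements of the ground set lie in a common circuit. -/
def MConnected (M : Matroid α) : Prop :=
  M.E.Nonempty ∧ ∀ a ∈ M.E, ∀ b ∈ M.E, a ≠ b → ∃ C, MCircuit M C ∧ a ∈ C ∧ b ∈ C

/-- The connected component of `e` in `M`: the equivalence class of `e` under the
relation "lying in a common circuit". -/
def MComponent (M : Matroid α) (e : α) : Set α :=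
  {f ∈ M.E | f = e ∨ ∃ C, MCircuit M C ∧ e ∈ C ∧ f ∈ C}

/-- A nested set of `M`: a collection of nonempty connected flats containing every
connected component of `M`, such that the closure of the union of any ≥ 2 pairwise
incomparable members induces a disconnected restriction. -/
def NestedSet (M : Matroid α) (S : Set (Set α)) : Prop :=
  (∀ F ∈ S, F.Nonempty ∧ M.IsFlat F ∧ MConnected (M.restrict F)) ∧
  (∀ e ∈ M.E, MComponent M e ∈ S) ∧
  (∀ T : Finset (Set α), ↑T ⊆ S → 2 ≤ T.card →
    (∀ F ∈ T, ∀ G ∈ T, F ≠ G → ¬ F ⊆ G ∧ ¬ G ⊆ F) →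
    ¬ MConnected (M.restrict (M.closure (⋃ F ∈ T, F))))

/-- `a : S → ℝ` is compatible with `S`: weakly monotone with respect to inclusion. -/
def Compat (S : Set (Set α)) (a : Set α → ℝ) : Prop :=
  ∀ F ∈ S, ∀ G ∈ S, F ⊆ G → a F ≤ a G

/-- `a : S → ℝ` is strictly compatible with `S`. -/
def StrictCompat (S : Set (Set α)) (a : Set α → ℝ) : Prop :=
  ∀ F ∈ S, ∀ G ∈ S, F ⊂ G → a F < a G

/-- `F` is the minimal member of `S` containing `e`. -/
def MinMem (S : Set (Set α)) (e : α) (F : Set α) : Prop :=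
  F ∈ S ∧ e ∈ F ∧ ∀ G ∈ S, e ∈ G → F ⊆ G

/-- `w` is the vector `w^{S,a}`, i.e. `w e = a (F_e)` where `F_e` is the minimal
member of `S` containing `e`, for every `e` in the ground set. -/
def Represents (M : Matroid α) (S : Set (Set α)) (a : Set α → ℝ) (w : α → ℝ) : Prop :=
  ∀ e ∈ M.E, ∃ F, MinMem S e F ∧ w e = a F

/-- `S` is the topology `T(w)` of the `M`-ultrametric `w`: the unique nested set
admitting a strictly compatible weighting representing `w`. -/
def IsTopologyOf (M : Matroid α) (w : α → ℝ) (S : Set (Set α)) : Prop :=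
  NestedSet M S ∧ ∃ a, StrictCompat S a ∧ Represents M S a w

/-- The rank of a set in a matroid: the largest cardinality of an independent subset. -/
noncomputable def mrank (M : Matroid α) (X : Set α) : ℕ :=
  sSup {n | ∃ I, I ⊆ X ∧ M.Indep I ∧ I.ncard = n}

/-- A polytomy of a nested set `S`: a member `F` with
`r(F) - r(⋃{G ∈ S : G ⊊ F}) ≥ 2`. -/
def Polytomy (M : Matroid α) (S : Set (Set α)) (F : Set α) : Prop :=
  F ∈ S ∧ mrank M (⋃₀ {G | G ∈ S ∧ G ⊂ F}) + 2 ≤ mrank M F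

/-- A resolution of a nested set `S`: a nested set containing `S` with no polytomies. -/
def MResolution (M : Matroid α) (S S' : Set (Set α)) : Prop :=
  NestedSet M S' ∧ S ⊆ S' ∧ ∀ F ∈ S', ¬ Polytomy M S' F

open scoped Classical in
/-- The weighting obtained from `a` by changing its value at `F` to `t`. -/
noncomputable def updF (a : Set α → ℝ) (F : Set α) (t : ℝ) : Set α → ℝ :=
  fun G => if G = F then t else a G

/-- `F ∈ S` is mobile for `w = w^{S,a} ∈ C(x)`: its weight can be strictly decreased,
keeping compatibility, so that the resulting vector is still in `C(x)`. -/
def Mobile [Fintype α] [Nonempty α] (M : Matroid α) (x : α → ℝ) (S : Set (Set α))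
    (a : Set α → ℝ) (w : α → ℝ) (F : Set α) : Prop :=
  F ∈ S ∧ ∃ t < a F, Compat S (updF a F t) ∧
    ∃ w', Represents M S (updF a F t) w' ∧ w' ≠ w ∧ w' ∈ CSet M x

/-- `w'` is obtained from `w = w^{S,a}` by sliding the mobile flat `F` all the way
down: the new weight `t` of `F` is either the maximum weight of the members of `S`
properly contained in `F`, or the least value keeping the result in `C(x)`. -/
def SlideTo [Fintype α] [Nonempty α] (M : Matroid α) (x : α → ℝ) (S : Set (Set α))
    (a : Set α → ℝ) (w : α → ℝ) (F : Set α) (w' : α → ℝ) : Prop :=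
  F ∈ S ∧ ∃ t < a F, Compat S (updF a F t) ∧ Represents M S (updF a F t) w' ∧
    w' ≠ w ∧ w' ∈ CSet M x ∧
    (IsGreatest {r | ∃ G, G ∈ S ∧ G ⊂ F ∧ r = a G} t ∨
      IsLeast {s | Compat S (updF a F s) ∧
        ∃ w'', Represents M S (updF a F s) w'' ∧ w'' ∈ CSet M x} t)

/-- `w'` is obtained from `w` by sliding some mobile member of some resolution of
`T(w)` all the way down. -/
def SlideStep [Fintype α] [Nonempty α] (M : Matroid α) (x : α → ℝ) (w w' : α → ℝ) :
    Prop :=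
  ∃ (T S : Set (Set α)) (a : Set α → ℝ) (F : Set α),
    IsTopologyOf M w T ∧ MResolution M T S ∧ Compat S a ∧
    Represents M S a w ∧ SlideTo M x S a w F w'

/-- The sequence `S₀ = {x^m}`, `S_{i+1} = ` vectors obtained from members of `S_i`
by sliding a mobile flat all the way down. -/
def Sseq [Fintype α] [Nonempty α] (M : Matroid α) (x xm : α → ℝ) : ℕ → Set (α → ℝ)
  | 0 => {xm}
  | i + 1 => {w' | ∃ w ∈ Sseq M x xm i, SlideStep M x w w'}

/-- `v` is a tropical vertex of `C(x)`. -/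
def TropVertex [Fintype α] [Nonempty α] (M : Matroid α) (x v : α → ℝ) : Prop :=
  v ∈ CSet M x ∧ ∀ u ∈ CSet M x, ∀ w ∈ CSet M x, ∀ lam mu : ℝ, max lam mu = 0 →
    (∀ e, v e = max (lam + u e) (mu + w e)) → v = u ∨ v = w

namespace Stmt16Aux
open Set
set_option linter.unusedSectionVars false
set_option linter.unusedVariables false

variable {α : Type*} [Fintype α] {M : Matroid α} {X Y C D I F F' : Set α} {e f g : α}

lemma subg (hE : M.E = Set.univ) (X : Set α) : X ⊆ M.E := by
  rw [hE]; exact Set.subset_univ X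

lemma le_mrank (hI : M.Indep I) (hIX : I ⊆ X) : I.ncard ≤ mrank M X := by
  refine le_csSup ⟨Fintype.card α, ?_⟩ ⟨I, hIX, hI, rfl⟩
  rintro n ⟨J, _, _, rfl⟩
  simpa [Set.ncard_univ] using Set.ncard_le_ncard (Set.subset_univ J) Set.finite_univ

lemma mrank_le {n : ℕ} (h : ∀ I, I ⊆ X → M.Indep I → I.ncard ≤ n) : mrank M X ≤ n := by
  refine csSup_le ⟨0, ∅, Set.empty_subset X, M.empty_indep, by simp⟩ ?_
  rintro m ⟨I, hIX, hI, rfl⟩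
  exact h I hIX hI

lemma Basis_mrank (hB : M.IsBasis I X) : mrank M X = I.ncard := by
  refine le_antisymm (mrank_le fun J hJX hJ => ?_) (le_mrank hB.indep hB.subset)
  obtain ⟨J', hJ', hJJ'⟩ := hJ.subset_isBasis_of_subset hJX hB.subset_ground
  have h1 : J'.encard = I.encard := hJ'.encard_eq_encard hB
  have h2 : J.ncard ≤ J'.ncard := Set.ncard_le_ncard hJJ' (Set.toFinite J')
  have h3 : J'.ncard = I.ncard := by rw [Set.ncard_def, h1, ← Set.ncard_def]
  omega

lemma mrank_mono (h : X ⊆ Y) : mrank M X ≤ mrank M Y :=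
  mrank_le fun I hIX hI => le_mrank hI (hIX.trans h)

lemma mrank_le_ncard (X : Set α) : mrank M X ≤ X.ncard :=
  mrank_le fun I hIX _ => Set.ncard_le_ncard hIX (Set.toFinite X)

lemma mrank_closure (hE : M.E = Set.univ) (X : Set α) :
    mrank M (M.closure X) = mrank M X := by
  obtain ⟨I, hI⟩ := M.exists_isBasis X (subg hE X)
  rw [Basis_mrank hI, Basis_mrank hI.isBasis_closure_right]

lemma mrank_insert_le : mrank M (insert e X) ≤ mrank M X + 1 := by
  refine mrank_le fun I hIX hI => ?_
  have h1 : I \ {e} ⊆ X := by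
    intro y hy; rcases hIX hy.1 with h | h
    · exact absurd h hy.2
    · exact h
  have h2 : I.ncard ≤ (I \ {e}).ncard + 1 := by
    by_cases he : e ∈ I
    · have h4 : I.ncard ≠ 0 := by
        simp [Set.ncard_eq_zero (Set.toFinite I)]
        exact Set.nonempty_iff_ne_empty.1 ⟨e, he⟩
      rw [Set.ncard_diff_singleton_of_mem he]
      omega
    · rw [Set.diff_singleton_eq_self he]
      omega
  exact h2.trans (Nat.add_le_add_right (le_mrank (hI.subset Set.diff_subset) h1) 1)

lemma mrank_insert_of_not_mem_closure (hE : M.E = Set.univ)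
    (he : e ∉ M.closure X) : mrank M (insert e X) = mrank M X + 1 := by
  obtain ⟨I, hI⟩ := M.exists_isBasis X (subg hE X)
  have hcl : M.closure I = M.closure X := hI.closure_eq_closure
  have heI : e ∉ I := fun h => he (hcl ▸ M.mem_closure_of_mem h (subg hE I))
  have hind : M.Indep (insert e I) := by
    rw [hI.indep.insert_indep_iff_of_notMem heI, hcl]
    exact ⟨by rw [hE]; trivial, he⟩
  have hle : I.ncard + 1 ≤ mrank M (insert e X) := by
    have := le_mrank hind (Set.insert_subset_insert hI.subset)
    rwa [Set.ncard_insert_of_notMem heI (Set.toFinite I)] at this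
  exact le_antisymm (by rw [← Basis_mrank hI] at *; exact mrank_insert_le)
    (by rw [Basis_mrank hI]; exact hle)

lemma flat_closure (M : Matroid α) (X : Set α) : M.IsFlat (M.closure X) := by
  rw [Matroid.closure_def]
  have hne : Nonempty {F // M.IsFlat F ∧ X ∩ M.E ⊆ F} :=
    ⟨⟨M.E, M.ground_isFlat, Set.inter_subset_right⟩⟩
  have h := Matroid.IsFlat.iInter (M := M)
    (Fs := fun F : {F // M.IsFlat F ∧ X ∩ M.E ⊆ F} => F.1) (fun F => F.2.1)
  convert h using 1
  rw [Set.sInter_eq_iInter]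
  apply Set.iInter_congr ?_  -- may fail; fix later
  intro i; rfl

lemma flat_eq_of_mrank (hE : M.E = Set.univ) (hF : M.IsFlat F) (hF' : M.IsFlat F')
    (hsub : F ⊆ F') (hr : mrank M F' ≤ mrank M F) : F = F' := by
  by_contra hne
  obtain ⟨z, hzF', hzF⟩ := Set.exists_of_ssubset (hsub.ssubset_of_ne hne)
  have hz : z ∉ M.closure F := by rwa [hF.closure]
  have h1 : mrank M F + 1 ≤ mrank M F' := by
    rw [← mrank_insert_of_not_mem_closure hE hz]
    exact mrank_mono (Set.insert_subset hzF' hsub)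
  omega

lemma closure_eq_flat_of_mrank (hE : M.E = Set.univ) (hF : M.IsFlat F) (hXF : X ⊆ F)
    (hr : mrank M F ≤ mrank M X) : M.closure X = F := by
  refine flat_eq_of_mrank hE (flat_closure M X) hF ?_ ?_
  · rw [← hF.closure]; exact M.closure_subset_closure hXF
  · rwa [mrank_closure hE]

end Stmt16Aux
namespace Stmt16Aux
open Set
set_option linter.unusedSectionVars false
set_option linter.unusedVariables false

variable {α : Type*} [Fintype α] {M : Matroid α} {X Y C D C₁ C₂ C₃ I F F' : Set α} {e f g z : α}

lemma exists_mcircuit_aux (hE : M.E = Set.univ) :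
    ∀ n, ∀ X : Set α, X.ncard ≤ n → ¬ M.Indep X → ∃ C, C ⊆ X ∧ MCircuit M C := by
  intro n
  induction n with
  | zero =>
    intro X hX hdep
    rw [Nat.le_zero, Set.ncard_eq_zero (Set.toFinite X)] at hX
    exact absurd (hX ▸ M.empty_indep) hdep
  | succ n ih =>
    intro X hX hdep
    by_cases h : ∀ D, D ⊂ X → M.Indep D
    · exact ⟨X, Set.Subset.rfl, subg hE X, hdep, h⟩
    · push_neg at h
      obtain ⟨D, hDX, hD⟩ := h
      have : D.ncard ≤ n := by
        have := Set.ncard_lt_ncard hDX (Set.toFinite X)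
        omega
      obtain ⟨C, hCD, hC⟩ := ih D this hD
      exact ⟨C, hCD.trans hDX.subset, hC⟩

lemma exists_mcircuit (hE : M.E = Set.univ) (hdep : ¬ M.Indep X) :
    ∃ C, C ⊆ X ∧ MCircuit M C :=
  exists_mcircuit_aux hE X.ncard X le_rfl hdep

lemma mcirc_dep (hC : MCircuit M C) : ¬ M.Indep C := hC.2.1

lemma mcirc_nonempty (hC : MCircuit M C) : C.Nonempty := by
  rw [Set.nonempty_iff_ne_empty]
  rintro rfl
  exact mcirc_dep hC M.empty_indep

lemma mcirc_exists_ne (hloop : ∀ e : α, M.Indep {e}) (hC : MCircuit M C) (hz : z ∈ C) :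
    ∃ y ∈ C, y ≠ z := by
  by_contra h
  push_neg at h
  have : C = {z} := Set.eq_singleton_iff_unique_mem.2 ⟨hz, h⟩
  exact mcirc_dep hC (this ▸ hloop z)

lemma mcirc_diff_singleton_indep (hC : MCircuit M C) (hz : z ∈ C) :
    M.Indep (C \ {z}) :=
  hC.2.2 _ (Set.sdiff_singleton_ssubset.2 hz)

lemma mcirc_subset_indep (hC : MCircuit M C) (hDC : D ⊂ C) : M.Indep D := hC.2.2 D hDC

lemma mcirc_eq_of_subset (hC : MCircuit M C) (hC' : MCircuit M C') (h : C ⊆ C') :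
    C = C' := by
  rcases h.ssubset_or_eq with h' | h'
  · exact absurd (mcirc_subset_indep hC' h') (mcirc_dep hC)
  · exact h'

lemma mcirc_mem_closure_diff (hE : M.E = Set.univ) (hC : MCircuit M C) (hz : z ∈ C) :
    z ∈ M.closure (C \ {z}) := by
  have hind := mcirc_diff_singleton_indep hC hz
  have hins : insert z (C \ {z}) = C := by
    rw [Set.insert_diff_singleton, Set.insert_eq_self.2 hz]
  have hdep : M.Dep (insert z (C \ {z})) := by
    rw [hins]; exact ⟨mcirc_dep hC, subg hE C⟩
  rw [hind.insert_dep_iff] at hdep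
  exact hdep.1

lemma mem_closure_mcircuit (hE : M.E = Set.univ) (he : e ∈ M.closure X) (heX : e ∉ X) :
    ∃ C, MCircuit M C ∧ e ∈ C ∧ C ⊆ insert e X := by
  obtain ⟨I, hI⟩ := M.exists_isBasis X (subg hE X)
  have hcl : e ∈ M.closure I := by rwa [hI.closure_eq_closure]
  have heI : e ∉ I := fun h => heX (hI.subset h)
  have hdep : M.Dep (insert e I) := hI.indep.insert_dep_iff.2 ⟨hcl, heI⟩
  obtain ⟨C, hCI, hC⟩ := exists_mcircuit hE hdep.1
  refine ⟨C, hC, ?_, hCI.trans (Set.insert_subset_insert hI.subset)⟩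
  by_contra heC
  have : C ⊆ I := fun y hy => ((hCI hy).resolve_left (fun h => heC (h ▸ hy)))
  exact mcirc_dep hC (hI.indep.subset this)

lemma closure_empty_eq (hE : M.E = Set.univ) (hloop : ∀ e : α, M.Indep {e}) :
    M.closure (∅ : Set α) = ∅ := by
  by_contra h
  obtain ⟨z, hz⟩ := Set.nonempty_iff_ne_empty.2 h
  obtain ⟨C, hC, hzC, hCsub⟩ := mem_closure_mcircuit hE hz (Set.notMem_empty z)
  have : C = {z} := Set.eq_singleton_iff_unique_mem.2 ⟨hzC, fun y hy => by simpa using hCsub hy⟩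
  exact mcirc_dep hC (this ▸ hloop z)

lemma circuits_union_mrank (hE : M.E = Set.univ) (hC₁ : MCircuit M C₁)
    (hC₂ : MCircuit M C₂) (hne : C₁ ≠ C₂) (hf : f ∈ C₁ ∩ C₂) :
    mrank M (C₁ ∪ C₂) + 2 ≤ (C₁ ∪ C₂).ncard := by
  have hg : ∃ g, g ∈ C₁ \ C₂ := by
    by_contra h
    push_neg at h
    have hsub : C₁ ⊆ C₂ := fun y hy => by
      by_contra hy2; exact h y ⟨hy, hy2⟩
    exact hne (mcirc_eq_of_subset hC₁ hC₂ hsub)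
  obtain ⟨g, hg1, hg2⟩ := hg
  have hfg : f ≠ g := fun h => hg2 (h ▸ hf.2)
  set W := M.closure ((C₁ ∪ C₂) \ {f, g}) with hW
  have hfW : f ∈ W := by
    have h1 : C₂ \ {f} ⊆ (C₁ ∪ C₂) \ {f, g} := by
      intro y hy
      exact ⟨Set.subset_union_right hy.1, by
        simp only [Set.mem_insert_iff, Set.mem_singleton_iff]
        push_neg
        exact ⟨fun h => hy.2 (by simp [h]), fun h => hg2 (h ▸ hy.1)⟩⟩
    exact M.closure_subset_closure h1 (mcirc_mem_closure_diff hE hC₂ hf.2)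
  have hsub1 : (C₁ ∪ C₂) \ {g} ⊆ W := by
    intro y hy
    by_cases hyf : y = f
    · exact hyf ▸ hfW
    · refine M.subset_closure _ (subg hE _) ⟨hy.1, ?_⟩
      simp only [Set.mem_insert_iff, Set.mem_singleton_iff]
      push_neg
      exact ⟨hyf, fun h => hy.2 (by simp [h])⟩
  have hgW : g ∈ W := by
    have h1 : g ∈ M.closure (C₁ \ {g}) := mcirc_mem_closure_diff hE hC₁ hg1
    have h2 : C₁ \ {g} ⊆ (C₁ ∪ C₂) \ {g} := fun y hy => ⟨Set.subset_union_left hy.1, hy.2⟩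
    have h3 : M.closure (C₁ \ {g}) ⊆ M.closure W :=
      (M.closure_subset_closure h2).trans (M.closure_subset_closure hsub1)
    rw [hW, Matroid.closure_closure] at h3
    exact h3 h1
  have hsub2 : C₁ ∪ C₂ ⊆ W := by
    intro y hy
    by_cases hyg : y = g
    · exact hyg ▸ hgW
    · exact hsub1 ⟨hy, hyg⟩
  have h4 : mrank M (C₁ ∪ C₂) ≤ ((C₁ ∪ C₂) \ {f, g}).ncard := by
    calc mrank M (C₁ ∪ C₂) ≤ mrank M W := mrank_mono hsub2
    _ = mrank M ((C₁ ∪ C₂) \ {f, g}) := mrank_closure hE _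
    _ ≤ _ := mrank_le_ncard _
  have h5 : ({f, g} : Set α) ⊆ C₁ ∪ C₂ := by
    intro y hy
    rcases hy with rfl | hy
    · exact Set.subset_union_left hf.1
    · rw [Set.mem_singleton_iff] at hy
      exact hy ▸ Set.subset_union_left hg1
  have h6 : ((C₁ ∪ C₂) \ {f, g}).ncard + ({f, g} : Set α).ncard = (C₁ ∪ C₂).ncard :=
    Set.ncard_diff_add_ncard_of_subset h5 (Set.toFinite _)
  have h7 : ({f, g} : Set α).ncard = 2 := Set.ncard_pair hfg
  omega

lemma elim_weak (hE : M.E = Set.univ) (hC₁ : MCircuit M C₁) (hC₂ : MCircuit M C₂)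
    (hne : C₁ ≠ C₂) (hf : f ∈ C₁ ∩ C₂) :
    ∃ C₃, MCircuit M C₃ ∧ C₃ ⊆ (C₁ ∪ C₂) \ {f} := by
  have hdep : ¬ M.Indep ((C₁ ∪ C₂) \ {f}) := by
    intro hind
    have h1 := le_mrank hind (Set.Subset.rfl)
    have h2 : mrank M ((C₁ ∪ C₂) \ {f}) ≤ mrank M (C₁ ∪ C₂) := mrank_mono Set.diff_subset
    have h3 := circuits_union_mrank hE hC₁ hC₂ hne hf
    have h4 : ((C₁ ∪ C₂) \ {f}).ncard + 1 = (C₁ ∪ C₂).ncard := by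
      have := Set.ncard_diff_add_ncard_of_subset
        (Set.singleton_subset_iff.2 (Set.subset_union_left hf.1)) (Set.toFinite (C₁ ∪ C₂))
      simpa using this
    omega
  obtain ⟨C, hCsub, hC⟩ := exists_mcircuit hE hdep
  exact ⟨C, hC, hCsub⟩

end Stmt16Aux
namespace Stmt16Aux
open Set
set_option linter.unusedSectionVars false
set_option linter.unusedVariables false

variable {α : Type*} [Fintype α] {M : Matroid α} {C D C₁ C₂ C₃ : Set α} {e f g z : α}

lemma elim_strong (hE : M.E = Set.univ) :
    ∀ n : ℕ, ∀ C₁ C₂ : Set α, ∀ f a : α, (C₁ ∪ C₂).ncard ≤ n →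
    MCircuit M C₁ → MCircuit M C₂ → f ∈ C₁ ∩ C₂ → a ∈ C₁ \ C₂ →
    ∃ C₃, MCircuit M C₃ ∧ a ∈ C₃ ∧ C₃ ⊆ (C₁ ∪ C₂) \ {f} := by
  intro n
  induction n with
  | zero =>
    intro C₁ C₂ f a hcard _ _ hf _
    rw [Nat.le_zero, Set.ncard_eq_zero (Set.toFinite _)] at hcard
    exact absurd (hcard ▸ Set.subset_union_left hf.1 : f ∈ (∅ : Set α)) (Set.notMem_empty f)
  | succ n ih =>
    intro C₁ C₂ f a hcard hC₁ hC₂ hf ha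
    have hne : C₁ ≠ C₂ := fun h => ha.2 (h ▸ ha.1)
    obtain ⟨C₃, hC₃, hC₃sub⟩ := elim_weak hE hC₁ hC₂ hne hf
    by_cases haC₃ : a ∈ C₃
    · exact ⟨C₃, hC₃, haC₃, hC₃sub⟩
    have hfC₃ : f ∉ C₃ := fun h => (hC₃sub h).2 rfl
    have hg : ∃ g, g ∈ C₃ ∩ (C₂ \ C₁) := by
      by_contra h
      push_neg at h
      have hsub : C₃ ⊆ C₁ := by
        intro y hy
        rcases (hC₃sub hy).1 with h1 | h1
        · exact h1
        · by_contra h2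
          exact h y ⟨hy, h1, h2⟩
      exact hfC₃ ((mcirc_eq_of_subset hC₃ hC₁ hsub) ▸ hf.1)
    obtain ⟨g, hgC₃, hgC₂, hgC₁⟩ := hg
    -- apply ih to (C₂, C₃) with common element g, target f ∈ C₂ \ C₃
    have hcard1 : (C₂ ∪ C₃).ncard ≤ n := by
      have hsub : C₂ ∪ C₃ ⊆ (C₁ ∪ C₂) \ {a} := by
        intro y hy
        rcases hy with hy | hy
        · exact ⟨Set.subset_union_right hy, fun h => ha.2 (h ▸ hy)⟩
        · exact ⟨(hC₃sub hy).1, fun h => haC₃ (h ▸ hy)⟩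
      have h1 := Set.ncard_le_ncard hsub (Set.toFinite _)
      have h2 : ((C₁ ∪ C₂) \ {a}).ncard + 1 = (C₁ ∪ C₂).ncard := by
        have := Set.ncard_diff_add_ncard_of_subset
          (Set.singleton_subset_iff.2 (Set.subset_union_left ha.1)) (Set.toFinite (C₁ ∪ C₂))
        simpa using this
      omega
    obtain ⟨C₄, hC₄, hfC₄, hC₄sub⟩ := ih C₂ C₃ g f hcard1 hC₂ hC₃ ⟨hgC₂, hgC₃⟩ ⟨hf.2, hfC₃⟩
    have haC₄ : a ∉ C₄ := by
      intro h
      rcases ((hC₄sub h).1) with h1 | h1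
      · exact ha.2 h1
      · exact haC₃ h1
    -- apply ih to (C₁, C₄) with common f, target a
    have hcard2 : (C₁ ∪ C₄).ncard ≤ n := by
      have hsub : C₁ ∪ C₄ ⊆ (C₁ ∪ C₂) \ {g} := by
        intro y hy
        rcases hy with hy | hy
        · exact ⟨Set.subset_union_left hy, fun h => hgC₁ (h ▸ hy)⟩
        · have h1 := hC₄sub hy
          refine ⟨?_, fun h => h1.2 (by simp [h])⟩
          rcases h1.1 with h2 | h2
          · exact Set.subset_union_right h2
          · exact (hC₃sub h2).1
      have h1 := Set.ncard_le_ncard hsub (Set.toFinite _)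
      have h2 : ((C₁ ∪ C₂) \ {g}).ncard + 1 = (C₁ ∪ C₂).ncard := by
        have := Set.ncard_diff_add_ncard_of_subset
          (Set.singleton_subset_iff.2 (Set.subset_union_right hgC₂)) (Set.toFinite (C₁ ∪ C₂))
        simpa using this
      omega
    obtain ⟨C₅, hC₅, haC₅, hC₅sub⟩ := ih C₁ C₄ f a hcard2 hC₁ hC₄ ⟨hf.1, hfC₄⟩ ⟨ha.1, haC₄⟩
    refine ⟨C₅, hC₅, haC₅, ?_⟩
    intro y hy
    have h1 := hC₅sub hy
    refine ⟨?_, h1.2⟩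
    rcases h1.1 with h2 | h2
    · exact Set.subset_union_left h2
    · rcases (hC₄sub h2).1 with h3 | h3
      · exact Set.subset_union_right h3
      · exact (hC₃sub h3).1

lemma circuit_trans_aux (hE : M.E = Set.univ) :
    ∀ n : ℕ, ∀ D₁ D₂ : Set α, ∀ p q : α, (D₁ ∪ D₂).ncard ≤ n →
    MCircuit M D₁ → MCircuit M D₂ → p ∈ D₁ → q ∈ D₂ → (D₁ ∩ D₂).Nonempty →
    ∃ C, MCircuit M C ∧ p ∈ C ∧ q ∈ C ∧ C ⊆ D₁ ∪ D₂ := by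
  intro n
  induction n with
  | zero =>
    intro D₁ D₂ p q hcard _ _ hp _ _
    rw [Nat.le_zero, Set.ncard_eq_zero (Set.toFinite _)] at hcard
    exact absurd (hcard ▸ Set.subset_union_left hp : p ∈ (∅ : Set α)) (Set.notMem_empty p)
  | succ n ih =>
    intro D₁ D₂ p q hcard hD₁ hD₂ hp hq hint
    by_cases hq₁ : q ∈ D₁
    · exact ⟨D₁, hD₁, hp, hq₁, Set.subset_union_left⟩
    by_cases hp₂ : p ∈ D₂
    · exact ⟨D₂, hD₂, hp₂, hq, Set.subset_union_right⟩
    obtain ⟨f, hf⟩ := hint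
    obtain ⟨C₃, hC₃, hpC₃, hC₃sub⟩ := elim_strong hE (D₁ ∪ D₂).ncard D₁ D₂ f p le_rfl
      hD₁ hD₂ hf ⟨hp, hp₂⟩
    by_cases hqC₃ : q ∈ C₃
    · exact ⟨C₃, hC₃, hpC₃, hqC₃, hC₃sub.trans Set.diff_subset⟩
    obtain ⟨C₄, hC₄, hqC₄, hC₄sub'⟩ := elim_strong hE (D₂ ∪ D₁).ncard D₂ D₁ f q le_rfl
      hD₂ hD₁ ⟨hf.2, hf.1⟩ ⟨hq, hq₁⟩
    have hC₄sub : C₄ ⊆ (D₁ ∪ D₂) \ {f} := by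
      rw [Set.union_comm D₁ D₂]; exact hC₄sub'
    by_cases hpC₄ : p ∈ C₄
    · exact ⟨C₄, hC₄, hpC₄, hqC₄, hC₄sub.trans Set.diff_subset⟩
    have hfC₃ : f ∉ C₃ := fun h => (hC₃sub h).2 rfl
    have hfC₄ : f ∉ C₄ := fun h => (hC₄sub h).2 rfl
    have hC₃D₂ : (C₃ ∩ D₂).Nonempty := by
      by_contra h
      rw [Set.not_nonempty_iff_eq_empty] at h
      have hsub : C₃ ⊆ D₁ := by
        intro y hy
        rcases (hC₃sub hy).1 with h1 | h1
        · exact h1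
        · exact absurd (Set.eq_empty_iff_forall_notMem.1 h y) (fun hh => hh ⟨hy, h1⟩)
      exact hfC₃ ((mcirc_eq_of_subset hC₃ hD₁ hsub) ▸ hf.1)
    -- case A : C₃ ∪ D₂ strictly smaller
    by_cases hA : C₃ ∪ D₂ = D₁ ∪ D₂
    · -- case B for the other side
      have hD₁C₄ : (D₁ ∩ C₄).Nonempty := by
        by_contra h
        rw [Set.not_nonempty_iff_eq_empty] at h
        have hsub : C₄ ⊆ D₂ := by
          intro y hy
          rcases (hC₄sub hy).1 with h1 | h1
          · exact absurd (Set.eq_empty_iff_forall_notMem.1 h y) (fun hh => hh ⟨h1, hy⟩)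
          · exact h1
        exact hfC₄ ((mcirc_eq_of_subset hC₄ hD₂ hsub) ▸ hf.2)
      by_cases hB : D₁ ∪ C₄ = D₁ ∪ D₂
      · -- both equal: D₂ \ D₁ ⊆ C₄, find common elt of C₃ and C₄, recurse on (C₃, C₄)
        have hD₂D₁C₄ : D₂ \ D₁ ⊆ C₄ := by
          intro y hy
          have : y ∈ D₁ ∪ C₄ := hB.symm ▸ (Set.subset_union_right hy.1)
          rcases this with h1 | h1
          · exact absurd h1 hy.2
          · exact h1
        have hC₃C₄ : (C₃ ∩ C₄).Nonempty := by
          have h1 : (C₃ ∩ (D₂ \ D₁)).Nonempty := by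
            by_contra h
            rw [Set.not_nonempty_iff_eq_empty] at h
            have hsub : C₃ ⊆ D₁ := by
              intro y hy
              rcases (hC₃sub hy).1 with h2 | h2
              · exact h2
              · by_cases h3 : y ∈ D₁
                · exact h3
                · exact absurd (Set.eq_empty_iff_forall_notMem.1 h y)
                    (fun hh => hh ⟨hy, h2, h3⟩)
            exact absurd ((mcirc_eq_of_subset hC₃ hD₁ hsub) ▸ hf.1) hfC₃
          obtain ⟨y, hy⟩ := h1
          exact ⟨y, hy.1, hD₂D₁C₄ hy.2⟩
        have hcard2 : (C₃ ∪ C₄).ncard ≤ n := by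
          have hsub : C₃ ∪ C₄ ⊆ (D₁ ∪ D₂) \ {f} := by
            intro y hy
            rcases hy with hy | hy
            · exact hC₃sub hy
            · exact hC₄sub hy
          have h1 := Set.ncard_le_ncard hsub (Set.toFinite _)
          have h2 : ((D₁ ∪ D₂) \ {f}).ncard + 1 = (D₁ ∪ D₂).ncard := by
            have := Set.ncard_diff_add_ncard_of_subset
              (Set.singleton_subset_iff.2 (Set.subset_union_left hf.1))
              (Set.toFinite (D₁ ∪ D₂))
            simpa using this
          omega
        obtain ⟨C, hC, hpC, hqC, hCsub⟩ := ih C₃ C₄ p q hcard2 hC₃ hC₄ hpC₃ hqC₄ hC₃C₄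
        refine ⟨C, hC, hpC, hqC, hCsub.trans ?_⟩
        intro y hy
        rcases hy with hy | hy
        · exact (hC₃sub hy).1
        · exact (hC₄sub hy).1
      · -- D₁ ∪ C₄ strictly smaller
        have hsub : D₁ ∪ C₄ ⊆ D₁ ∪ D₂ := by
          intro y hy
          rcases hy with hy | hy
          · exact Set.subset_union_left hy
          · exact (hC₄sub hy).1
        have hcard2 : (D₁ ∪ C₄).ncard ≤ n := by
          have h1 := Set.ncard_lt_ncard (hsub.ssubset_of_ne hB) (Set.toFinite _)
          omega
        obtain ⟨C, hC, hpC, hqC, hCsub⟩ := ih D₁ C₄ p q hcard2 hD₁ hC₄ hp hqC₄ hD₁C₄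
        exact ⟨C, hC, hpC, hqC, hCsub.trans hsub⟩
    · -- C₃ ∪ D₂ strictly smaller
      have hsub : C₃ ∪ D₂ ⊆ D₁ ∪ D₂ := by
        intro y hy
        rcases hy with hy | hy
        · exact (hC₃sub hy).1
        · exact Set.subset_union_right hy
      have hcard2 : (C₃ ∪ D₂).ncard ≤ n := by
        have h1 := Set.ncard_lt_ncard (hsub.ssubset_of_ne hA) (Set.toFinite _)
        omega
      obtain ⟨C, hC, hpC, hqC, hCsub⟩ := ih C₃ D₂ p q hcard2 hC₃ hD₂ hpC₃ hq hC₃D₂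
      exact ⟨C, hC, hpC, hqC, hCsub.trans hsub⟩

lemma circuit_trans (hE : M.E = Set.univ) {D₁ D₂ : Set α} {p q : α}
    (hD₁ : MCircuit M D₁) (hD₂ : MCircuit M D₂) (hp : p ∈ D₁) (hq : q ∈ D₂)
    (hint : (D₁ ∩ D₂).Nonempty) :
    ∃ C, MCircuit M C ∧ p ∈ C ∧ q ∈ C ∧ C ⊆ D₁ ∪ D₂ :=
  circuit_trans_aux hE (D₁ ∪ D₂).ncard D₁ D₂ p q le_rfl hD₁ hD₂ hp hq hint

end Stmt16Aux
namespace Stmt16Aux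
open Set
set_option linter.unusedSectionVars false
set_option linter.unusedVariables false

variable {α : Type*} [Fintype α] {M : Matroid α} {S : Set (Set α)} {L C D F G : Set α} {a b e z : α}

/-- Two elements lie on a common circuit inside `L`. -/
def Conn2 (M : Matroid α) (L : Set α) (a b : α) : Prop :=
  ∃ C, MCircuit M C ∧ C ⊆ L ∧ a ∈ C ∧ b ∈ C

lemma Conn2.symm (h : Conn2 M L a b) : Conn2 M L b a := by
  obtain ⟨C, h1, h2, h3, h4⟩ := h
  exact ⟨C, h1, h2, h4, h3⟩

lemma conn2_trans (hE : M.E = Set.univ) {c : α} (h1 : Conn2 M L a b) (h2 : Conn2 M L b c) :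
    Conn2 M L a c := by
  obtain ⟨C₁, hC₁, hC₁L, haC₁, hbC₁⟩ := h1
  obtain ⟨C₂, hC₂, hC₂L, hbC₂, hcC₂⟩ := h2
  obtain ⟨C, hC, haC, hcC, hCsub⟩ := circuit_trans hE hC₁ hC₂ haC₁ hcC₂ ⟨b, hbC₁, hbC₂⟩
  exact ⟨C, hC, hCsub.trans (Set.union_subset hC₁L hC₂L), haC, hcC⟩

lemma mcircuit_restrict_iff (hE : M.E = Set.univ) :
    MCircuit (M.restrict L) C ↔ MCircuit M C ∧ C ⊆ L := by
  constructor
  · rintro ⟨hCL, hdep, hmin⟩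
    rw [Matroid.restrict_ground_eq] at hCL
    refine ⟨⟨subg hE C, fun h => hdep (Matroid.restrict_indep_iff.2 ⟨h, hCL⟩), ?_⟩, hCL⟩
    intro D hD
    exact ((Matroid.restrict_indep_iff).1 (hmin D hD)).1
  · rintro ⟨⟨_, hdep, hmin⟩, hCL⟩
    refine ⟨by rwa [Matroid.restrict_ground_eq], fun h => hdep (Matroid.restrict_indep_iff.1 h).1, ?_⟩
    intro D hD
    exact Matroid.restrict_indep_iff.2 ⟨hmin D hD, hD.subset.trans hCL⟩

lemma mconnected_restrict_iff (hE : M.E = Set.univ) :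
    MConnected (M.restrict L) ↔ L.Nonempty ∧ ∀ a ∈ L, ∀ b ∈ L, a ≠ b → Conn2 M L a b := by
  unfold MConnected
  rw [Matroid.restrict_ground_eq]
  constructor
  · rintro ⟨hne, h⟩
    refine ⟨hne, fun a ha b hb hab => ?_⟩
    obtain ⟨C, hC, haC, hbC⟩ := h a ha b hb hab
    rw [mcircuit_restrict_iff hE] at hC
    exact ⟨C, hC.1, hC.2, haC, hbC⟩
  · rintro ⟨hne, h⟩
    refine ⟨hne, fun a ha b hb hab => ?_⟩
    obtain ⟨C, hC, hCL, haC, hbC⟩ := h a ha b hb hab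
    exact ⟨C, (mcircuit_restrict_iff hE).2 ⟨hC, hCL⟩, haC, hbC⟩

lemma conn_union (hE : M.E = Set.univ) (hloop : ∀ e : α, M.Indep {e})
    (hF : MConnected (M.restrict F)) (hG : MConnected (M.restrict G)) (he : e ∈ F ∩ G) :
    MConnected (M.restrict (M.closure (F ∪ G))) := by
  set L := M.closure (F ∪ G) with hL
  have hFGL : F ∪ G ⊆ L := M.subset_closure _ (subg hE _)
  rw [mconnected_restrict_iff hE] at hF hG ⊢
  have hFL : F ⊆ L := (Set.subset_union_left).trans hFGL
  have hGL : G ⊆ L := (Set.subset_union_right).trans hFGL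
  have hlink0 : ∀ z ∈ F ∪ G, z = e ∨ Conn2 M L z e := by
    intro z hz
    by_cases hze : z = e
    · exact Or.inl hze
    rcases hz with hz | hz
    · obtain ⟨C, hC, hCF, hzC, heC⟩ := hF.2 z hz e he.1 hze
      exact Or.inr ⟨C, hC, hCF.trans hFL, hzC, heC⟩
    · obtain ⟨C, hC, hCG, hzC, heC⟩ := hG.2 z hz e he.2 hze
      exact Or.inr ⟨C, hC, hCG.trans hGL, hzC, heC⟩
  have hlink : ∀ z ∈ L, z = e ∨ Conn2 M L z e := by
    intro z hz
    by_cases hzFG : z ∈ F ∪ G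
    · exact hlink0 z hzFG
    obtain ⟨C, hC, hzC, hCsub⟩ := mem_closure_mcircuit hE hz hzFG
    have hCL : C ⊆ L := hCsub.trans (Set.insert_subset hz hFGL)
    obtain ⟨y, hyC, hyz⟩ := mcirc_exists_ne hloop hC hzC
    have hyFG : y ∈ F ∪ G := by
      rcases hCsub hyC with h | h
      · exact absurd h hyz
      · exact h
    have h1 : Conn2 M L z y := ⟨C, hC, hCL, hzC, hyC⟩
    rcases hlink0 y hyFG with rfl | h2
    · exact Or.inr h1
    · exact Or.inr (conn2_trans hE h1 h2)
  refine ⟨⟨e, hFGL (Or.inl he.1)⟩, fun a ha b hb hab => ?_⟩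
  rcases hlink a ha with rfl | h1
  · rcases hlink b hb with rfl | h2
    · exact absurd rfl hab
    · exact h2.symm
  · rcases hlink b hb with rfl | h2
    · exact h1
    · exact conn2_trans hE h1 h2.symm

lemma nested_pair_cond (hS : NestedSet M S) (hF : F ∈ S) (hG : G ∈ S)
    (hFG : ¬ F ⊆ G) (hGF : ¬ G ⊆ F) :
    ¬ MConnected (M.restrict (M.closure (F ∪ G))) := by
  classical
  have hne : F ≠ G := fun h => hFG (h ▸ Set.Subset.rfl)
  have h := hS.2.2 {F, G} ?_ ?_ ?_
  · have hunion : (⋃ X ∈ ({F, G} : Finset (Set α)), X) = F ∪ G := by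
      simp
    rwa [hunion] at h
  · intro X hX
    simp only [Finset.coe_insert, Finset.coe_singleton, Set.mem_insert_iff,
      Set.mem_singleton_iff] at hX
    rcases hX with rfl | rfl
    · exact hF
    · exact hG
  · rw [Finset.card_insert_of_notMem (by simpa using hne), Finset.card_singleton]
  · intro X hX Y hY hXY
    simp only [Finset.mem_insert, Finset.mem_singleton] at hX hY
    rcases hX with rfl | rfl <;> rcases hY with rfl | rfl
    · exact absurd rfl hXY
    · exact ⟨hFG, hGF⟩
    · exact ⟨hGF, hFG⟩
    · exact absurd rfl hXY

lemma nested_or_disjoint (hE : M.E = Set.univ) (hloop : ∀ e : α, M.Indep {e})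
    (hS : NestedSet M S) (hF : F ∈ S) (hG : G ∈ S) (hmeet : (F ∩ G).Nonempty) :
    F ⊆ G ∨ G ⊆ F := by
  by_contra h
  push_neg at h
  obtain ⟨e, he⟩ := hmeet
  exact nested_pair_cond hS hF hG h.1 h.2
    (conn_union hE hloop (hS.1 F hF).2.2 (hS.1 G hG).2.2 he)

end Stmt16Aux
namespace Stmt16Aux
open Set
set_option linter.unusedSectionVars false
set_option linter.unusedVariables false

variable {α : Type*} [Fintype α] {M : Matroid α} {S : Set (Set α)} {L C D F G : Set α} {a b e z : α}

lemma rtg_conn2 (hE : M.E = Set.univ) (h : Relation.ReflTransGen (Conn2 M L) a b) :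
    a = b ∨ Conn2 M L a b := by
  induction h with
  | refl => exact Or.inl rfl
  | tail hxy hstep ih =>
    rcases ih with rfl | h1
    · exact Or.inr hstep
    · exact Or.inr (conn2_trans hE h1 hstep)

lemma sep_aux (hE : M.E = Set.univ) (hloop : ∀ e : α, M.Indep {e}) (hS : NestedSet M S) :
    ∀ n : ℕ, ∀ 𝒟 : Set (Set α), 𝒟.ncard ≤ n → 𝒟 ⊆ S →
    (∀ D₁ ∈ 𝒟, ∀ D₂ ∈ 𝒟, D₁ ≠ D₂ → D₁ ∩ D₂ = ∅) →
    M.closure (⋃₀ 𝒟) = ⋃₀ 𝒟 ∧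
      (∀ C, MCircuit M C → C ⊆ ⋃₀ 𝒟 → ∃ D ∈ 𝒟, C ⊆ D) := by
  intro n
  induction n with
  | zero =>
    intro 𝒟 hcard _ _
    rw [Nat.le_zero, Set.ncard_eq_zero (Set.toFinite 𝒟)] at hcard
    subst hcard
    rw [Set.sUnion_empty]
    exact ⟨closure_empty_eq hE hloop,
      fun C hC hCsub => absurd ((mcirc_nonempty hC).mono hCsub) (by simp)⟩
  | succ n ih =>
    intro 𝒟 hcard h𝒟S hdisj
    by_cases hsmall : 𝒟.ncard ≤ n
    · exact ih 𝒟 hsmall h𝒟S hdisj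
    by_cases hsingle : ∃ D, 𝒟 = {D}
    · obtain ⟨D, rfl⟩ := hsingle
      rw [Set.sUnion_singleton]
      exact ⟨((hS.1 D (h𝒟S rfl)).2.1).closure,
        fun C hC hCsub => ⟨D, rfl, hCsub⟩⟩
    -- now 𝒟.ncard ≥ 2
    have hcard2 : 2 ≤ 𝒟.ncard := by
      have h0 : 𝒟.ncard ≠ 1 := fun h1 => hsingle ((Set.ncard_eq_one).1 h1)
      omega
    set L := M.closure (⋃₀ 𝒟) with hLdef
    have hUL : ⋃₀ 𝒟 ⊆ L := M.subset_closure _ (subg hE _)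
    have hDne : ∀ D ∈ 𝒟, D.Nonempty := fun D hD => (hS.1 D (h𝒟S hD)).1
    have hDconn : ∀ D ∈ 𝒟, MConnected (M.restrict D) := fun D hD => (hS.1 D (h𝒟S hD)).2.2
    -- disconnectedness from nested set axiom
    have hdisc : ¬ MConnected (M.restrict L) := by
      classical
      have hfin : 𝒟.Finite := Set.toFinite 𝒟
      have h := hS.2.2 hfin.toFinset ?_ ?_ ?_
      · have hunion : (⋃ X ∈ hfin.toFinset, X) = ⋃₀ 𝒟 := by
          ext y
          simp only [Set.mem_iUnion, Set.Finite.mem_toFinset, Set.mem_sUnion]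
          exact ⟨fun ⟨i, h1, h2⟩ => ⟨i, h1, h2⟩, fun ⟨i, h1, h2⟩ => ⟨i, h1, h2⟩⟩
        rwa [hunion] at h
      · intro X hX
        rw [Set.Finite.coe_toFinset] at hX
        exact h𝒟S hX
      · rwa [Set.ncard_eq_toFinset_card 𝒟 hfin] at hcard2
      · intro X hX Y hY hXY
        rw [Set.Finite.mem_toFinset] at hX hY
        have hd := hdisj X hX Y hY hXY
        obtain ⟨x, hx⟩ := hDne X hX
        obtain ⟨y, hy⟩ := hDne Y hY
        constructor
        · intro hsub
          exact absurd (Set.mem_inter hx (hsub hx)) (by rw [hd]; exact Set.notMem_empty x)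
        · intro hsub
          exact absurd (Set.mem_inter (hsub hy) hy) (by rw [hd]; exact Set.notMem_empty y)
    rw [mconnected_restrict_iff hE] at hdisc
    push_neg at hdisc
    have hLne : L.Nonempty := by
      obtain ⟨D, hD⟩ := Set.nonempty_of_ncard_ne_zero (by omega : 𝒟.ncard ≠ 0)
      obtain ⟨d, hd⟩ := hDne D hD
      exact ⟨d, hUL ⟨D, hD, hd⟩⟩
    obtain ⟨a, ha, b, hb, hab, hnoC⟩ := hdisc hLne
    set P := {z ∈ L | Relation.ReflTransGen (Conn2 M L) a z} with hPdef
    have haP : a ∈ P := ⟨ha, Relation.ReflTransGen.refl⟩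
    have hbP : b ∉ P := by
      rintro ⟨_, hrtg⟩
      rcases rtg_conn2 hE hrtg with rfl | hc
      · exact hab rfl
      · exact hnoC hc
    have hPL : P ⊆ L := fun z hz => hz.1
    -- a circuit inside L lies in one side
    have circ_side : ∀ C, MCircuit M C → C ⊆ L → ∀ y ∈ C, ∀ y' ∈ C, y ∈ P → y' ∈ P := by
      intro C hC hCL y hy y' hy' hyP
      by_cases h : y = y'
      · exact h ▸ hyP
      · exact ⟨hCL hy', hyP.2.tail ⟨C, hC, hCL, hy, hy'⟩⟩
    have member_side : ∀ D ∈ 𝒟, (D ⊆ P ∨ D ∩ P = ∅) := by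
      intro D hD
      by_cases h : (D ∩ P).Nonempty
      · obtain ⟨d, hdD, hdP⟩ := h
        left
        intro d' hd'
        by_cases hdd : d' = d
        · exact hdd ▸ hdP
        have hconn := (mconnected_restrict_iff hE).1 (hDconn D hD)
        obtain ⟨C, hC, hCD, hdC, hd'C⟩ := hconn.2 d hdD d' hd' (fun hh => hdd hh.symm)
        have hCL : C ⊆ L := hCD.trans ((Set.subset_sUnion_of_mem hD).trans hUL)
        exact circ_side C hC hCL d hdC d' hd'C hdP
      · exact Or.inr (Set.not_nonempty_iff_eq_empty.1 h)
    set 𝒟P := {D ∈ 𝒟 | D ⊆ P} with h𝒟P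
    set 𝒟Q := {D ∈ 𝒟 | D ∩ P = ∅} with h𝒟Q
    have hUP : ⋃₀ 𝒟 ∩ P = ⋃₀ 𝒟P := by
      ext y
      constructor
      · rintro ⟨⟨D, hD, hyD⟩, hyP⟩
        rcases member_side D hD with h | h
        · exact ⟨D, ⟨hD, h⟩, hyD⟩
        · exact absurd (Set.mem_inter hyD hyP) (by rw [h]; exact Set.notMem_empty y)
      · rintro ⟨D, ⟨hD, hDP⟩, hyD⟩
        exact ⟨⟨D, hD, hyD⟩, hDP hyD⟩
    have hUQ : ⋃₀ 𝒟 \ P = ⋃₀ 𝒟Q := by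
      ext y
      constructor
      · rintro ⟨⟨D, hD, hyD⟩, hyP⟩
        rcases member_side D hD with h | h
        · exact absurd (h hyD) hyP
        · exact ⟨D, ⟨hD, h⟩, hyD⟩
      · rintro ⟨D, ⟨hD, hDP⟩, hyD⟩
        refine ⟨⟨D, hD, hyD⟩, fun hyP => ?_⟩
        exact absurd (Set.mem_inter hyD hyP) (by rw [hDP]; exact Set.notMem_empty y)
    -- attachment
    have attachP : P ⊆ M.closure (⋃₀ 𝒟P) := by
      intro z hz
      by_cases hzU : z ∈ ⋃₀ 𝒟
      · exact M.subset_closure _ (subg hE _) (hUP ▸ Set.mem_inter hzU hz)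
      obtain ⟨C, hC, hzC, hCsub⟩ := mem_closure_mcircuit hE (hz.1 : z ∈ L) hzU
      have hCL : C ⊆ L := hCsub.trans (Set.insert_subset hz.1 hUL)
      have hCdiff : C \ {z} ⊆ ⋃₀ 𝒟P := by
        intro y hy
        have hyU : y ∈ ⋃₀ 𝒟 := by
          rcases hCsub hy.1 with h | h
          · exact absurd h hy.2
          · exact h
        have hyP : y ∈ P := circ_side C hC hCL z hzC y hy.1 hz
        exact hUP ▸ Set.mem_inter hyU hyP
      exact M.closure_subset_closure hCdiff (mcirc_mem_closure_diff hE hC hzC)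
    have attachQ : L \ P ⊆ M.closure (⋃₀ 𝒟Q) := by
      intro z hz
      by_cases hzU : z ∈ ⋃₀ 𝒟
      · exact M.subset_closure _ (subg hE _) (hUQ ▸ Set.mem_inter hzU hz.2)
      obtain ⟨C, hC, hzC, hCsub⟩ := mem_closure_mcircuit hE (hz.1 : z ∈ L) hzU
      have hCL : C ⊆ L := hCsub.trans (Set.insert_subset hz.1 hUL)
      have hCdiff : C \ {z} ⊆ ⋃₀ 𝒟Q := by
        intro y hy
        have hyU : y ∈ ⋃₀ 𝒟 := by
          rcases hCsub hy.1 with h | h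
          · exact absurd h hy.2
          · exact h
        have hyP : y ∉ P := fun hyP => hz.2 (circ_side C hC hCL y hy.1 z hzC hyP)
        exact hUQ ▸ Set.mem_inter hyU hyP
      exact M.closure_subset_closure hCdiff (mcirc_mem_closure_diff hE hC hzC)
    -- cardinalities
    have h𝒟Psub : 𝒟P ⊆ 𝒟 := fun D hD => hD.1
    have h𝒟Qsub : 𝒟Q ⊆ 𝒟 := fun D hD => hD.1
    have h𝒟Pne : 𝒟P.Nonempty := by
      by_contra h
      rw [Set.not_nonempty_iff_eq_empty] at h
      have : a ∈ M.closure (⋃₀ 𝒟P) := attachP haP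
      rw [h, Set.sUnion_empty, closure_empty_eq hE hloop] at this
      exact this
    have h𝒟Qne : 𝒟Q.Nonempty := by
      by_contra h
      rw [Set.not_nonempty_iff_eq_empty] at h
      have : b ∈ M.closure (⋃₀ 𝒟Q) := attachQ ⟨hb, hbP⟩
      rw [h, Set.sUnion_empty, closure_empty_eq hE hloop] at this
      exact this
    have hPQdisj : ∀ D, D ∈ 𝒟P → D ∉ 𝒟Q := by
      rintro D ⟨hD, hDP⟩ ⟨_, hDQ⟩
      obtain ⟨d, hd⟩ := hDne D hD
      exact absurd (Set.mem_inter hd (hDP hd)) (by rw [hDQ]; exact Set.notMem_empty d)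
    have hcardP : 𝒟P.ncard ≤ n := by
      obtain ⟨D, hD⟩ := h𝒟Qne
      have : 𝒟P ⊂ 𝒟 := (h𝒟Psub).ssubset_of_ne (fun h => hPQdisj D (h ▸ h𝒟Qsub hD) hD)
      have := Set.ncard_lt_ncard this (Set.toFinite 𝒟)
      omega
    have hcardQ : 𝒟Q.ncard ≤ n := by
      obtain ⟨D, hD⟩ := h𝒟Pne
      have hne : 𝒟Q ≠ 𝒟 := fun h => hPQdisj D hD (h ▸ h𝒟Psub hD)
      have := Set.ncard_lt_ncard ((h𝒟Qsub).ssubset_of_ne hne) (Set.toFinite 𝒟)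
      omega
    have hdisjP : ∀ D₁ ∈ 𝒟P, ∀ D₂ ∈ 𝒟P, D₁ ≠ D₂ → D₁ ∩ D₂ = ∅ :=
      fun D₁ h1 D₂ h2 h => hdisj D₁ (h𝒟Psub h1) D₂ (h𝒟Psub h2) h
    have hdisjQ : ∀ D₁ ∈ 𝒟Q, ∀ D₂ ∈ 𝒟Q, D₁ ≠ D₂ → D₁ ∩ D₂ = ∅ :=
      fun D₁ h1 D₂ h2 h => hdisj D₁ (h𝒟Qsub h1) D₂ (h𝒟Qsub h2) h
    obtain ⟨hclP, hcircP⟩ := ih 𝒟P hcardP (h𝒟Psub.trans h𝒟S) hdisjP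
    obtain ⟨hclQ, hcircQ⟩ := ih 𝒟Q hcardQ (h𝒟Qsub.trans h𝒟S) hdisjQ
    have hPeq : P = ⋃₀ 𝒟P := by
      refine Set.Subset.antisymm (by rw [← hclP]; exact attachP) ?_
      rintro y ⟨D, ⟨hD, hDP⟩, hyD⟩
      exact hDP hyD
    have hQeq : L \ P = ⋃₀ 𝒟Q := by
      refine Set.Subset.antisymm (by rw [← hclQ]; exact attachQ) ?_
      rintro y ⟨D, ⟨hD, hDQ⟩, hyD⟩
      refine ⟨hUL ⟨D, hD, hyD⟩, fun hyP => ?_⟩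
      exact absurd (Set.mem_inter hyD hyP) (by rw [hDQ]; exact Set.notMem_empty y)
    have hLeq : L = ⋃₀ 𝒟 := by
      refine Set.Subset.antisymm ?_ hUL
      intro z hz
      by_cases hzP : z ∈ P
      · obtain ⟨D, hD, hzD⟩ := hPeq ▸ hzP
        exact ⟨D, h𝒟Psub hD, hzD⟩
      · obtain ⟨D, hD, hzD⟩ := hQeq ▸ (Set.mem_diff z).2 ⟨hz, hzP⟩
        exact ⟨D, h𝒟Qsub hD, hzD⟩
    refine ⟨hLeq, fun C hC hCsub => ?_⟩
    have hCL : C ⊆ L := hCsub.trans hUL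
    obtain ⟨c0, hc0⟩ := mcirc_nonempty hC
    by_cases hc0P : c0 ∈ P
    · have hCP : C ⊆ ⋃₀ 𝒟P := by
        rw [← hPeq]
        exact fun y hy => circ_side C hC hCL c0 hc0 y hy hc0P
      obtain ⟨D, hD, hCD⟩ := hcircP C hC hCP
      exact ⟨D, h𝒟Psub hD, hCD⟩
    · have hCQ : C ⊆ ⋃₀ 𝒟Q := by
        rw [← hQeq]
        intro y hy
        refine ⟨hCL hy, fun hyP => hc0P ?_⟩
        exact circ_side C hC hCL y hy c0 hc0 hyP
      obtain ⟨D, hD, hCD⟩ := hcircQ C hC hCQ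
      exact ⟨D, h𝒟Qsub hD, hCD⟩

lemma sep (hE : M.E = Set.univ) (hloop : ∀ e : α, M.Indep {e}) (hS : NestedSet M S)
    {𝒟 : Set (Set α)} (h𝒟S : 𝒟 ⊆ S)
    (hdisj : ∀ D₁ ∈ 𝒟, ∀ D₂ ∈ 𝒟, D₁ ≠ D₂ → D₁ ∩ D₂ = ∅) :
    M.closure (⋃₀ 𝒟) = ⋃₀ 𝒟 ∧
      (∀ C, MCircuit M C → C ⊆ ⋃₀ 𝒟 → ∃ D ∈ 𝒟, C ⊆ D) :=
  sep_aux hE hloop hS 𝒟.ncard 𝒟 le_rfl h𝒟S hdisj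

end Stmt16Aux
namespace Stmt16Aux
open Set
set_option linter.unusedSectionVars false
set_option linter.unusedVariables false

variable {α : Type*} {S : Set (Set α)} {F F' : Set α} {e : α}

lemma minmem_unique (h : MinMem S e F) (h' : MinMem S e F') : F = F' :=
  Set.Subset.antisymm (h.2.2 F' h'.1 h'.2.1) (h'.2.2 F h.1 h.2.1)

end Stmt16Aux

open Stmt16Aux

/-- A tropical vertex `v` of `C(x)` has at most one mobile flat across all resolutions
of its topology: mobile flats of any two resolutions coincide. -/
theorem stmt16 [Fintype α] [Nonempty α] (M : Matroid α) (hE : M.E = Set.univ)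
    (hloop : ∀ e, M.Indep {e}) (x v : α → ℝ) (hv : TropVertex M x v)
    (T S₁ S₂ : Set (Set α)) (hT : IsTopologyOf M v T)
    (hS₁ : MResolution M T S₁) (hS₂ : MResolution M T S₂)
    (a₁ a₂ : Set α → ℝ) (ha₁ : Compat S₁ a₁) (ha₂ : Compat S₂ a₂)
    (hr₁ : Represents M S₁ a₁ v) (hr₂ : Represents M S₂ a₂ v)
    (F₁ F₂ : Set α) (hm₁ : Mobile M x S₁ a₁ v F₁) (hm₂ : Mobile M x S₂ a₂ v F₂) :
    F₁ = F₂ := by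
  classical
  obtain ⟨hF₁S, t₁, ht₁, hcompat₁, w₁, hw₁rep, hw₁ne, hw₁C⟩ := hm₁
  obtain ⟨hF₂S, t₂, ht₂, hcompat₂, w₂, hw₂rep, hw₂ne, hw₂C⟩ := hm₂
  have hmem : ∀ e : α, e ∈ M.E := fun e => by rw [hE]; trivial
  have hw₁eq : ∀ f (F : Set α), MinMem S₁ f F → v f = a₁ F ∧ w₁ f = updF a₁ F₁ t₁ F := by
    intro f F hmm
    obtain ⟨F', hF', hvf⟩ := hr₁ f (hmem f)
    obtain ⟨F'', hF'', hwf⟩ := hw₁rep f (hmem f)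
    rw [minmem_unique hF' hmm] at hvf
    rw [minmem_unique hF'' hmm] at hwf
    exact ⟨hvf, hwf⟩
  have hw₂eq : ∀ f (F : Set α), MinMem S₂ f F → v f = a₂ F ∧ w₂ f = updF a₂ F₂ t₂ F := by
    intro f F hmm
    obtain ⟨F', hF', hvf⟩ := hr₂ f (hmem f)
    obtain ⟨F'', hF'', hwf⟩ := hw₂rep f (hmem f)
    rw [minmem_unique hF' hmm] at hvf
    rw [minmem_unique hF'' hmm] at hwf
    exact ⟨hvf, hwf⟩
  -- Step 1 : a common element in the free parts of F₁ and F₂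
  have hcom : ∃ e, MinMem S₁ e F₁ ∧ MinMem S₂ e F₂ := by
    by_contra hno
    push_neg at hno
    have hdec : ∀ f, v f = max (0 + w₁ f) (0 + w₂ f) := by
      intro f
      obtain ⟨P1, hP1, hv1⟩ := hr₁ f (hmem f)
      obtain ⟨P2, hP2, hv2⟩ := hr₂ f (hmem f)
      have hww₁ := (hw₁eq f P1 hP1).2
      have hww₂ := (hw₂eq f P2 hP2).2
      rw [zero_add, zero_add]
      by_cases h1 : P1 = F₁
      · have h2 : P2 ≠ F₂ := fun h2 => hno f (h1 ▸ hP1) (h2 ▸ hP2)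
        rw [hww₁, hww₂]
        unfold updF
        rw [if_pos h1, if_neg h2]
        rw [← hv2]
        have hlt : t₁ < v f := by rw [hv1, h1]; exact ht₁
        rw [max_eq_right hlt.le]
      · rw [hww₁, hww₂]
        unfold updF
        rw [if_neg h1, ← hv1]
        by_cases h2 : P2 = F₂
        · rw [if_pos h2]
          have hlt : t₂ < v f := by rw [hv2, h2]; exact ht₂
          rw [max_eq_left hlt.le]
        · rw [if_neg h2, ← hv2, max_self]
    rcases hv.2 w₁ hw₁C w₂ hw₂C 0 0 (max_self 0) hdec with h | h
    · exact hw₁ne h.symm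
    · exact hw₂ne h.symm
  obtain ⟨e, hme₁, hme₂⟩ := hcom
  -- topology data
  obtain ⟨hTnest, aT, hstrict, hTrep⟩ := hT
  obtain ⟨G, hmG, hveG⟩ := hTrep e (hmem e)
  have hTS₁ : T ⊆ S₁ := hS₁.2.1
  have hTS₂ : T ⊆ S₂ := hS₂.2.1
  -- the atom predicate : maximal members of T strictly below G
  set AtomP : Set α → Prop :=
    fun H => H ∈ T ∧ H ⊂ G ∧ (∀ K ∈ T, H ⊆ K → K ⊂ G → K = H) with hAtomP
  have he_not_atom : ∀ H, AtomP H → e ∉ H := by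
    rintro H ⟨hHT, hHG, _⟩ heH
    exact hHG.2 (hmG.2.2 H hHT heH)
  have hatom_disj : ∀ H H', AtomP H → AtomP H' → H ≠ H' → H ∩ H' = ∅ := by
    intro H H' hH hH' hne
    by_contra h
    have hmeet : (H ∩ H').Nonempty := Set.nonempty_iff_ne_empty.2 h
    rcases nested_or_disjoint hE hloop hTnest hH.1 hH'.1 hmeet with hsub | hsub
    · exact hne (hH.2.2 H' hH'.1 hsub hH'.2.1).symm
    · exact hne (hH'.2.2 H hH.1 hsub hH.2.1)
  have hatom_exists : ∀ f (Pf : Set α), MinMem T f Pf → Pf ⊆ G → Pf ≠ G →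
      ∃ H, AtomP H ∧ f ∈ H := by
    intro f Pf hPf hPfG hPfne
    set fam := {K | K ∈ T ∧ Pf ⊆ K ∧ K ⊂ G} with hfam
    have hfamne : fam.Nonempty := ⟨Pf, hPf.1, Set.Subset.rfl, hPfG.ssubset_of_ne hPfne⟩
    obtain ⟨H, hHfam, hHmax⟩ :=
      Set.Finite.exists_maximalFor id fam (Set.toFinite fam) hfamne
    refine ⟨H, ⟨hHfam.1, hHfam.2.2, ?_⟩, hHfam.2.1 hPf.2.1⟩
    intro K hKT hHK hKG
    exact Set.Subset.antisymm (hHmax (j := K) ⟨hKT, hHfam.2.1.trans hHK, hKG⟩ hHK) hHK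
  -- the structure of a mobile flat
  have side : ∀ (S : Set (Set α)) (a : Set α → ℝ) (F : Set α) (t : ℝ),
      MResolution M T S → Compat S a → Represents M S a v →
      F ∈ S → t < a F → Compat S (updF a F t) → MinMem S e F →
      (∀ H, AtomP H → (H ⊆ F ∨ H ∩ F = ∅)) ∧
      F = M.closure (insert e (⋃₀ {H | AtomP H ∧ H ⊆ F})) := by
    intro S a F t hres hcomp hrep hFS ht hcompup hmeF
    have hSnest := hres.1
    have hTS : T ⊆ S := hres.2.1
    have hFG : F ⊆ G := hmeF.2.2 G (hTS hmG.1) hmG.2.1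
    have hcF : v e = a F := by
      obtain ⟨P, hP, hvP⟩ := hrep e (hmem e)
      rwa [minmem_unique hP hmeF] at hvP
    have hatomF : ∀ H, AtomP H → (H ⊆ F ∨ H ∩ F = ∅) := by
      intro H hH
      by_cases hmeet : (H ∩ F).Nonempty
      · rcases nested_or_disjoint hE hloop hSnest (hTS hH.1) hFS hmeet with h | h
        · exact Or.inl h
        · exact absurd (h hmeF.2.1) (he_not_atom H hH)
      · exact Or.inr (Set.not_nonempty_iff_eq_empty.1 hmeet)
    set AtF := {H | AtomP H ∧ H ⊆ F} with hAtF
    have hsubatoms : ⋃₀ {K | K ∈ S ∧ K ⊂ F} ⊆ ⋃₀ AtF := by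
      rintro f ⟨K, ⟨hKS, hKF⟩, hfK⟩
      obtain ⟨Pf, hPf, hvf⟩ := hrep f (hmem f)
      have hPfK : Pf ⊆ K := hPf.2.2 K hKS hfK
      have hvle : v f ≤ a K := by rw [hvf]; exact hcomp Pf hPf.1 K hKS hPfK
      have haK : a K ≤ t := by
        have h := hcompup K hKS F hFS hKF.subset
        unfold updF at h
        rw [if_neg hKF.ne, if_pos rfl] at h
        exact h
      have hvlt : v f < a F := lt_of_le_of_lt (hvle.trans haK) ht
      obtain ⟨Qf, hQf, hvf2⟩ := hTrep f (hmem f)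
      have hfG : f ∈ G := hFG (hKF.subset hfK)
      have hQfG : Qf ⊆ G := hQf.2.2 G hmG.1 hfG
      have hQfne : Qf ≠ G := by
        intro h
        rw [h, ← hveG, hcF] at hvf2
        exact absurd hvf2 hvlt.ne
      obtain ⟨H, hH, hfH⟩ := hatom_exists f Qf hQf hQfG hQfne
      rcases hatomF H hH with h | h
      · exact ⟨H, ⟨hH, h⟩, hfH⟩
      · exact absurd (Set.mem_inter hfH (hKF.subset hfK))
          (by rw [h]; exact Set.notMem_empty f)
    have hAtFsub : AtF ⊆ S := fun H hH => hTS hH.1.1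
    have hAtFdisj : ∀ D₁ ∈ AtF, ∀ D₂ ∈ AtF, D₁ ≠ D₂ → D₁ ∩ D₂ = ∅ :=
      fun D₁ h1 D₂ h2 h => hatom_disj D₁ D₂ h1.1 h2.1 h
    obtain ⟨hclAtF, _⟩ := sep hE hloop hSnest hAtFsub hAtFdisj
    have heAtF : e ∉ ⋃₀ AtF := by
      rintro ⟨H, hH, heH⟩
      exact he_not_atom H hH.1 heH
    have hecl : e ∉ M.closure (⋃₀ {K | K ∈ S ∧ K ⊂ F}) := by
      intro h
      have h2 := M.closure_subset_closure hsubatoms h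
      rw [hclAtF] at h2
      exact heAtF h2
    have hnp := hres.2.2 F hFS
    unfold Polytomy at hnp
    push_neg at hnp
    have hrank : mrank M F ≤ mrank M (⋃₀ {K | K ∈ S ∧ K ⊂ F}) + 1 := by
      have h := hnp hFS
      omega
    have hflatF : M.IsFlat F := (hSnest.1 F hFS).2.1
    have hsubF : insert e (⋃₀ {K | K ∈ S ∧ K ⊂ F}) ⊆ F := by
      rintro y (rfl | ⟨K, ⟨hKS, hKF⟩, hyK⟩)
      · exact hmeF.2.1
      · exact hKF.subset hyK
    have hrk2 : mrank M (insert e (⋃₀ {K | K ∈ S ∧ K ⊂ F}))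
        = mrank M (⋃₀ {K | K ∈ S ∧ K ⊂ F}) + 1 :=
      mrank_insert_of_not_mem_closure hE hecl
    have hFeq : M.closure (insert e (⋃₀ {K | K ∈ S ∧ K ⊂ F})) = F :=
      closure_eq_flat_of_mrank hE hflatF hsubF (by rw [hrk2]; exact hrank)
    refine ⟨hatomF, Set.Subset.antisymm ?_ ?_⟩
    · rw [← hFeq]
      exact M.closure_subset_closure (Set.insert_subset_insert hsubatoms)
    · have hins : insert e (⋃₀ AtF) ⊆ F := by
        rintro y (rfl | ⟨H, hH, hyH⟩)
        · exact hmeF.2.1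
        · exact hH.2 hyH
      rw [← hflatF.closure]
      exact M.closure_subset_closure hins
  obtain ⟨hatomF₁, hF₁eq⟩ := side S₁ a₁ F₁ t₁ hS₁ ha₁ hr₁ hF₁S ht₁ hcompat₁ hme₁
  obtain ⟨hatomF₂, hF₂eq⟩ := side S₂ a₂ F₂ t₂ hS₂ ha₂ hr₂ hF₂S ht₂ hcompat₂ hme₂
  -- the cross argument
  have cross : ∀ (S S' : Set (Set α)) (F F' : Set α),
      MResolution M T S → MResolution M T S' → F ∈ S → F' ∈ S' →
      MinMem S e F → MinMem S' e F' →
      (∀ H, AtomP H → (H ⊆ F' ∨ H ∩ F' = ∅)) →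
      F = M.closure (insert e (⋃₀ {H | AtomP H ∧ H ⊆ F})) →
      ∀ H₀, AtomP H₀ → H₀ ⊆ F → H₀ ⊆ F' := by
    intro S S' F F' hres hres' hFS hF'S' hmeF hmeF' hatomF' hFeq H₀ hH₀ hH₀F
    by_contra hH₀F'
    have hH₀disj : H₀ ∩ F' = ∅ := (hatomF' H₀ hH₀).resolve_left hH₀F'
    set Dfam := insert F' {H | AtomP H ∧ H ⊆ F ∧ H ∩ F' = ∅} with hDfam
    have hDsub : Dfam ⊆ S' := by
      rintro D (rfl | ⟨hAt, _, _⟩)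
      · exact hF'S'
      · exact hres'.2.1 hAt.1
    have hDdisj : ∀ D₁ ∈ Dfam, ∀ D₂ ∈ Dfam, D₁ ≠ D₂ → D₁ ∩ D₂ = ∅ := by
      rintro D₁ (rfl | ⟨hAt1, _, hdj1⟩) D₂ (rfl | ⟨hAt2, _, hdj2⟩) hne
      · exact absurd rfl hne
      · rw [Set.inter_comm]; exact hdj2
      · exact hdj1
      · exact hatom_disj D₁ D₂ hAt1 hAt2 hne
    obtain ⟨hclD, hcircD⟩ := sep hE hloop hres'.1 hDsub hDdisj
    have hconnF : MConnected (M.restrict F) := (hres.1.1 F hFS).2.2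
    obtain ⟨h0, hh0⟩ := (hTnest.1 H₀ hH₀.1).1
    have heh : e ≠ h0 := fun h => he_not_atom H₀ hH₀ (h ▸ hh0)
    have hconnF' := (mconnected_restrict_iff hE).1 hconnF
    obtain ⟨C, hC, hCF, heC, hh0C⟩ := hconnF'.2 e hmeF.2.1 h0 (hH₀F hh0) heh
    have hCD : C ⊆ ⋃₀ Dfam := by
      have h2 : insert e (⋃₀ {H | AtomP H ∧ H ⊆ F}) ⊆ ⋃₀ Dfam := by
        rintro y (rfl | ⟨H, hH, hyH⟩)
        · exact ⟨F', Set.mem_insert _ _, hmeF'.2.1⟩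
        · rcases hatomF' H hH.1 with h | h
          · exact ⟨F', Set.mem_insert _ _, h hyH⟩
          · exact ⟨H, Set.mem_insert_iff.2 (Or.inr ⟨hH.1, hH.2, h⟩), hyH⟩
      have h1 : C ⊆ M.closure (⋃₀ Dfam) := by
        intro y hy
        exact M.closure_subset_closure h2 (hFeq ▸ hCF hy)
      rwa [hclD] at h1
    obtain ⟨D, hD, hCsubD⟩ := hcircD C hC hCD
    rcases hD with rfl | ⟨hAt, _, _⟩
    · exact absurd (Set.mem_inter hh0 (hCsubD hh0C))
        (by rw [hH₀disj]; exact Set.notMem_empty h0)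
    · exact he_not_atom D hAt (hCsubD heC)
  have h12 : ∀ H, AtomP H → H ⊆ F₁ → H ⊆ F₂ :=
    cross S₁ S₂ F₁ F₂ hS₁ hS₂ hF₁S hF₂S hme₁ hme₂ hatomF₂ hF₁eq
  have h21 : ∀ H, AtomP H → H ⊆ F₂ → H ⊆ F₁ :=
    cross S₂ S₁ F₂ F₁ hS₂ hS₁ hF₂S hF₁S hme₂ hme₁ hatomF₁ hF₂eq
  have hsets : {H | AtomP H ∧ H ⊆ F₁} = {H | AtomP H ∧ H ⊆ F₂} :=
    Set.ext fun H => ⟨fun ⟨h1, h2⟩ => ⟨h1, h12 H h1 h2⟩, fun ⟨h1, h2⟩ => ⟨h1, h21 H h1 h2⟩⟩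
  rw [hF₁eq, hsets, ← hF₂eq]
end
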